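/- arXiv:1901.11010 — 9 statements merged into one kernel-verified Lean document; each statement's English description precedes it below -/
import Mathlib

section
/- The flat term B applied to itself 8 times, B⁸ₗ = ((((((B B) B) B) B) B) B) B, is βη-equal to the 3-argument composition λf.λg.λx.λy.λz. f (g x y z). -/
/-- Untyped lambda terms in de Bruijn representation. -/
inductive Lam : Type
  | var : Nat → Lam
  | app : Lam → Lam → Lam
  | lam : Lam → Lam
  deriving DecidableEq

namespace Lam

/-- Shift free variables `≥ d` up by one. -/
def lift (d : Nat) : Lam → Lam
  | var n => var (if n < d then n else n + 1)
  | app a b => app (lift d a) (lift d b)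
  | lam a => lam (lift (d + 1) a)

/-- Substitute `s` for variable `d` (and lower the variables above `d`). -/
def subst (d : Nat) (s : Lam) : Lam → Lam
  | var n => if n = d then s else if d < n then var (n - 1) else var n
  | app a b => app (subst d s a) (subst d s b)
  | lam a => lam (subst (d + 1) (lift 0 s) a)

/-- βη-equivalence of lambda terms. -/
inductive BetaEta : Lam → Lam → Prop
  | beta (t s : Lam) : BetaEta (app (lam t) s) (subst 0 s t)
  | eta (t : Lam) : BetaEta (lam (app (lift 0 t) (var 0))) t
  | refl (t : Lam) : BetaEta t t
  | symm {t s : Lam} : BetaEta t s → BetaEta s t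
  | trans {t s u : Lam} : BetaEta t s → BetaEta s u → BetaEta t u
  | congApp {t t' s s' : Lam} : BetaEta t t' → BetaEta s s' →
      BetaEta (app t s) (app t' s')
  | congLam {t t' : Lam} : BetaEta t t' → BetaEta (lam t) (lam t')

/-- The B combinator `λf.λg.λx. f (g x)`. -/
def B : Lam := lam (lam (lam (app (var 2) (app (var 1) (var 0)))))

/-- Left-nested self-application `X X ... X` with `k` copies (for `k ≥ 1`). -/
def sapp (X : Lam) : Nat → Lam
  | 0 => X
  | 1 => X
  | k + 2 => app (sapp X (k + 1)) X

end Lam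

namespace Lam


/-- One leftmost beta-reduction step. -/
def step : Lam → Option Lam
  | var _ => none
  | lam t => (step t).map lam
  | app (lam t) s => some (subst 0 s t)
  | app a b =>
    match step a with
    | some a' => some (app a' b)
    | none => (step b).map (app a)

theorem step_sound : ∀ t t', step t = some t' → BetaEta t t'
  | var _, _, h => by simp [step] at h
  | lam t, t', h => by
    simp only [step, Option.map_eq_some_iff] at h
    obtain ⟨u, hu, rfl⟩ := h
    exact BetaEta.congLam (step_sound t u hu)
  | app (lam t) s, t', h => by
    simp only [step] at h
    cases h
    exact BetaEta.beta t s
  | app (var n) b, t', h => by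
    simp only [step, Option.map_eq_some_iff] at h
    obtain ⟨u, hu, rfl⟩ := h
    exact BetaEta.congApp (BetaEta.refl _) (step_sound b u hu)
  | app (app a1 a2) b, t', h => by
    simp only [step] at h
    rcases hs : step (app a1 a2) with _ | a'
    · rw [hs] at h
      simp only [Option.map_eq_some_iff] at h
      obtain ⟨u, hu, rfl⟩ := h
      exact BetaEta.congApp (BetaEta.refl _) (step_sound b u hu)
    · rw [hs] at h
      cases h
      exact BetaEta.congApp (step_sound _ a' hs) (BetaEta.refl _)

/-- Iterate `step` up to `n` times. -/
def nsteps : Nat → Lam → Lam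
  | 0, t => t
  | n + 1, t =>
    match h : step t with
    | some t' => nsteps n t'
    | none => t

theorem nsteps_sound (n : Nat) (t : Lam) : BetaEta t (nsteps n t) := by
  induction n generalizing t with
  | zero => exact BetaEta.refl t
  | succ n ih =>
    rw [nsteps]
    rcases h : step t with _ | t'
    · exact BetaEta.refl t
    · exact BetaEta.trans (step_sound t t' h) (ih t')

theorem sapp_B_eight :
    BetaEta (sapp B 8)
      (lam (lam (lam (lam (lam
        (app (var 4) (app (app (app (var 3) (var 2)) (var 1)) (var 0)))))))) := by
  have h := nsteps_sound 100 (sapp B 8)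
  have e : nsteps 100 (sapp B 8) =
      (lam (lam (lam (lam (lam
        (app (var 4) (app (app (app (var 3) (var 2)) (var 1)) (var 0)))))))) := by decide
  rwa [e] at h

end Lam
end

section
/- The flat terms B⁶ₗ and B¹⁰ₗ (left-nested applications of B to itself 6 and 10 times) are both βη-equal to λx.λy.λz.λw.λv. x (y z) (w v); consequently Bⁱₗ = B^{i+4}ₗ (βη) for every i ≥ 6, i.e., B has the ρ-property with ρ(B) = (6,4). -/
namespace Lam

/-- λx.λy.λz.λw.λv. x (y z) (w v) -/
def E : Lam :=
  lam (lam (lam (lam (lam (app (app (var 4) (app (var 3) (var 2))) (app (var 1) (var 0)))))))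

/-! ### Auxiliary development: confluence of βη-reduction -/

def size : Lam → Nat
  | var _ => 1
  | app a b => size a + size b + 1
  | lam a => size a + 1

/-- Does variable `d` occur free in the term? -/
def hasVar (d : Nat) : Lam → Bool
  | var n => n == d
  | app a b => hasVar d a || hasVar d b
  | lam a => hasVar (d+1) a

/-- Lower the variables above `d` by one. -/
def lower (d : Nat) : Lam → Lam
  | var n => var (if d < n then n - 1 else n)
  | app a b => app (lower d a) (lower d b)
  | lam a => lam (lower (d+1) a)

theorem size_lift (d : Nat) (t : Lam) : size (lift d t) = size t := by
  induction t generalizing d <;> simp [lift, size, *]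

theorem size_lower (d : Nat) (t : Lam) : size (lower d t) = size t := by
  induction t generalizing d <;> simp [lower, size, *]

theorem lift_lift {d e : Nat} (h : d ≤ e) (t : Lam) :
    lift d (lift e t) = lift (e+1) (lift d t) := by
  induction t generalizing d e with
  | var n => simp only [lift]; split_ifs <;> simp_all [lift] <;> omega
  | app a b iha ihb => simp [lift, iha h, ihb h]
  | lam a ih => simp [lift, ih (by omega : d+1 ≤ e+1)]

theorem subst_lift {c d : Nat} (h : c ≤ d) (x t : Lam) :
    subst (d+1) (lift c x) (lift c t) = lift c (subst d x t) := by
  induction t generalizing c d x with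
  | var n => simp only [lift, subst]; split_ifs <;> (try simp only [lift, subst, lower, hasVar, var.injEq, beq_eq_false_iff_ne, ne_eq]) <;> (try split_ifs) <;> first | rfl | omega
  | app a b iha ihb => simp [lift, subst, iha h, ihb h]
  | lam a ih =>
      simp only [lift, subst]
      rw [lift_lift (Nat.zero_le c), ih (by omega : c+1 ≤ d+1)]

theorem subst_lift_cancel (d : Nat) (x t : Lam) : subst d x (lift d t) = t := by
  induction t generalizing d x with
  | var n => simp only [lift, subst]; split_ifs <;> (try simp only [lift, subst, lower, hasVar, var.injEq, beq_eq_false_iff_ne, ne_eq]) <;> (try split_ifs) <;> first | rfl | omega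
  | app a b iha ihb => simp [lift, subst, iha, ihb]
  | lam a ih => simp [lift, subst, ih]

theorem lift_subst {e d : Nat} (h : e ≤ d) (x t : Lam) :
    lift d (subst e x t) = subst e (lift d x) (lift (d+1) t) := by
  induction t generalizing e d x with
  | var n => simp only [lift, subst]; split_ifs <;> (try simp only [lift, subst, lower, hasVar, var.injEq, beq_eq_false_iff_ne, ne_eq]) <;> (try split_ifs) <;> first | rfl | omega
  | app a b iha ihb => simp [lift, subst, iha h, ihb h]
  | lam a ih =>
      simp only [lift, subst]
      rw [ih (by omega : e+1 ≤ d+1), lift_lift (Nat.zero_le d)]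

theorem subst_subst {c d : Nat} (h : c ≤ d) (x y t : Lam) :
    subst d x (subst c y t) = subst c (subst d x y) (subst (d+1) (lift c x) t) := by
  induction t generalizing c d x y with
  | var n =>
      simp only [subst]
      split_ifs <;> (try simp only [subst, subst_lift_cancel, var.injEq]) <;> (try split_ifs) <;> first | rfl | omega
  | app a b iha ihb => simp [subst, iha h, ihb h]
  | lam a ih =>
      simp only [subst]
      rw [ih (by omega : c+1 ≤ d+1), subst_lift (Nat.zero_le d), lift_lift (Nat.zero_le c)]

theorem subst_var_lift (d : Nat) (t : Lam) : subst d (var d) (lift (d+1) t) = t := by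
  induction t generalizing d with
  | var n => simp only [lift, subst]; split_ifs <;> (try simp only [lift, subst, lower, hasVar, var.injEq, beq_eq_false_iff_ne, ne_eq]) <;> (try split_ifs) <;> first | rfl | omega
  | app a b iha ihb => simp [lift, subst, iha, ihb]
  | lam a ih =>
      simp only [lift, subst]
      rw [if_neg (by omega : ¬ d < 0), ih]

theorem hasVar_lift_self (d : Nat) (t : Lam) : hasVar d (lift d t) = false := by
  induction t generalizing d with
  | var n => simp only [lift, hasVar, beq_eq_false_iff_ne, ne_eq]; split_ifs <;> (try simp only [lift, subst, lower, hasVar, var.injEq, beq_eq_false_iff_ne, ne_eq]) <;> (try split_ifs) <;> first | rfl | omega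
  | app a b iha ihb => simp [lift, hasVar, iha, ihb]
  | lam a ih => simp [lift, hasVar, ih]

theorem lift_lower {d : Nat} {t : Lam} (h : hasVar d t = false) :
    lift d (lower d t) = t := by
  induction t generalizing d with
  | var n =>
      simp only [hasVar, beq_eq_false_iff_ne, ne_eq] at h
      simp only [lower, lift, var.injEq]; split_ifs <;> (try simp only [lift, subst, lower, hasVar, var.injEq, beq_eq_false_iff_ne, ne_eq]) <;> (try split_ifs) <;> first | rfl | omega
  | app a b iha ihb =>
      simp only [hasVar, Bool.or_eq_false_iff] at h
      simp [lower, lift, iha h.1, ihb h.2]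
  | lam a ih =>
      simp only [hasVar] at h
      simp [lower, lift, ih h]

theorem lower_lift (d : Nat) (t : Lam) : lower d (lift d t) = t := by
  induction t generalizing d with
  | var n => simp only [lift, lower, var.injEq]; split_ifs <;> (try simp only [lift, subst, lower, hasVar, var.injEq, beq_eq_false_iff_ne, ne_eq]) <;> (try split_ifs) <;> first | rfl | omega
  | app a b iha ihb => simp [lift, lower, iha, ihb]
  | lam a ih => simp [lift, lower, ih]

theorem lift_inj {d : Nat} {t s : Lam} (h : lift d t = lift d s) : t = s := by
  have := congrArg (lower d) h
  rwa [lower_lift, lower_lift] at this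

theorem hasVar_lift_lt {c d : Nat} (h : c < d) (t : Lam) :
    hasVar c (lift d t) = hasVar c t := by
  induction t generalizing c d with
  | var n =>
      simp only [lift, hasVar]
      split_ifs with h1
      · rfl
      · have h2 : n + 1 ≠ c := by omega
        have h3 : n ≠ c := by omega
        simp [h2, h3]
  | app a b iha ihb => simp [lift, hasVar, iha h, ihb h]
  | lam a ih => simp [lift, hasVar, ih (by omega : c+1 < d+1)]

theorem lower_lift_comm {c d : Nat} (h : c ≤ d) {t : Lam} (hv : hasVar c t = false) :
    lower c (lift (d+1) t) = lift d (lower c t) := by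
  induction t generalizing c d with
  | var n =>
      simp only [hasVar, beq_eq_false_iff_ne, ne_eq] at hv
      simp only [lift, lower, var.injEq]; split_ifs <;> (try simp only [lift, subst, lower, hasVar, var.injEq, beq_eq_false_iff_ne, ne_eq]) <;> (try split_ifs) <;> first | rfl | omega
  | app a b iha ihb =>
      simp only [hasVar, Bool.or_eq_false_iff] at hv
      simp [lift, lower, iha h hv.1, ihb h hv.2]
  | lam a ih =>
      simp only [hasVar] at hv
      simp [lift, lower, ih (by omega : c+1 ≤ d+1) hv]

/-! ### One-step βη-reduction and its reflexive-transitive closure -/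

inductive Step : Lam → Lam → Prop
  | beta (t s : Lam) : Step (app (lam t) s) (subst 0 s t)
  | eta (t : Lam) : Step (lam (app (lift 0 t) (var 0))) t
  | appL {a a' : Lam} (b : Lam) : Step a a' → Step (app a b) (app a' b)
  | appR (a : Lam) {b b' : Lam} : Step b b' → Step (app a b) (app a b')
  | lam {t t' : Lam} : Step t t' → Step (lam t) (lam t')

abbrev Star : Lam → Lam → Prop := Relation.ReflTransGen Step

theorem step_lift (d : Nat) {t s : Lam} (h : Step t s) : Step (lift d t) (lift d s) := by
  induction h generalizing d with
  | beta t s =>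
      have : lift d (subst 0 s t) = subst 0 (lift d s) (lift (d+1) t) :=
        lift_subst (Nat.zero_le d) s t
      simpa [lift, this] using Step.beta (lift (d+1) t) (lift d s)
  | eta t =>
      have h1 : lift (d+1) (lift 0 t) = lift 0 (lift d t) := (lift_lift (Nat.zero_le d) t).symm
      have h2 : lift (d+1) (var 0) = var 0 := by simp [lift]
      simpa [lift, h1, h2] using Step.eta (lift d t)
  | appL b _ ih => simpa [lift] using Step.appL (lift d b) (ih d)
  | appR a _ ih => simpa [lift] using Step.appR (lift d a) (ih d)
  | lam _ ih => simpa [lift] using Step.lam (ih (d+1))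

theorem star_appL {a a' : Lam} (b : Lam) (h : Star a a') : Star (app a b) (app a' b) :=
  Relation.ReflTransGen.lift (fun x => app x b) (fun _ _ hs => Step.appL b hs) _ _ h

theorem star_appR (a : Lam) {b b' : Lam} (h : Star b b') : Star (app a b) (app a b') :=
  Relation.ReflTransGen.lift (fun x => app a x) (fun _ _ hs => Step.appR a hs) _ _ h

theorem star_app {a a' b b' : Lam} (h1 : Star a a') (h2 : Star b b') :
    Star (app a b) (app a' b') := (star_appL b h1).trans (star_appR a' h2)

theorem star_lam {t t' : Lam} (h : Star t t') : Star (lam t) (lam t') :=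
  Relation.ReflTransGen.lift lam (fun _ _ hs => Step.lam hs) _ _ h

theorem star_lift (d : Nat) {t t' : Lam} (h : Star t t') : Star (lift d t) (lift d t') :=
  Relation.ReflTransGen.lift (lift d) (fun _ _ hs => step_lift d hs) _ _ h

/-! ### Parallel reduction -/

inductive Par : Lam → Lam → Prop
  | var (n : Nat) : Par (var n) (var n)
  | app {t t' s s' : Lam} : Par t t' → Par s s' → Par (app t s) (app t' s')
  | lam {t t' : Lam} : Par t t' → Par (lam t) (lam t')
  | beta {t t' s s' : Lam} : Par t t' → Par s s' → Par (app (lam t) s) (subst 0 s' t')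
  | eta {t t' : Lam} : Par t t' → Par (lam (app (lift 0 t) (var 0))) t'

theorem par_refl (t : Lam) : Par t t := by
  induction t with
  | var n => exact Par.var n
  | app a b iha ihb => exact Par.app iha ihb
  | lam a ih => exact Par.lam ih

theorem step_par {t s : Lam} (h : Step t s) : Par t s := by
  induction h with
  | beta t s => exact Par.beta (par_refl t) (par_refl s)
  | eta t => exact Par.eta (par_refl t)
  | appL b _ ih => exact Par.app ih (par_refl b)
  | appR a _ ih => exact Par.app (par_refl a) ih
  | lam _ ih => exact Par.lam ih

theorem par_star {t s : Lam} (h : Par t s) : Star t s := by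
  induction h with
  | var n => exact Relation.ReflTransGen.refl
  | app _ _ ih1 ih2 => exact star_app ih1 ih2
  | lam _ ih => exact star_lam ih
  | beta _ _ ih1 ih2 =>
      exact (star_app (star_lam ih1) ih2).trans
        (Relation.ReflTransGen.single (Step.beta _ _))
  | eta _ ih =>
      exact (star_lam (star_app (star_lift 0 ih) Relation.ReflTransGen.refl)).trans
        (Relation.ReflTransGen.single (Step.eta _))

theorem par_lift (d : Nat) {t s : Lam} (h : Par t s) : Par (lift d t) (lift d s) := by
  induction h generalizing d with
  | var n => exact par_refl _
  | app _ _ ih1 ih2 => exact Par.app (ih1 d) (ih2 d)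
  | lam _ ih => exact Par.lam (ih (d+1))
  | @beta t0 t0' s0 s0' _ _ ih1 ih2 =>
      have e : lift d (subst 0 s0' t0') = subst 0 (lift d s0') (lift (d+1) t0') :=
        lift_subst (Nat.zero_le d) s0' t0'
      simpa [lift, e] using Par.beta (ih1 (d+1)) (ih2 d)
  | @eta t0 t0' _ ih =>
      have h1 : lift (d+1) (lift 0 t0) = lift 0 (lift d t0) := (lift_lift (Nat.zero_le d) t0).symm
      have h2 : lift (d+1) (var 0) = var 0 := by simp [lift]
      simpa [lift, h1, h2] using Par.eta (ih d)

theorem par_subst {t t' : Lam} (ht : Par t t') {s s' : Lam} (hs : Par s s') (d : Nat) :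
    Par (subst d s t) (subst d s' t') := by
  induction ht generalizing s s' d with
  | var n =>
      simp only [subst]; split_ifs <;> first | exact hs | exact par_refl _
  | app _ _ ih1 ih2 => exact Par.app (ih1 hs d) (ih2 hs d)
  | lam _ ih => exact Par.lam (ih (par_lift 0 hs) (d+1))
  | @beta t0 t0' s0 s0' _ _ ih1 ih2 =>
      have e : subst d s' (subst 0 s0' t0')
          = subst 0 (subst d s' s0') (subst (d+1) (lift 0 s') t0') :=
        subst_subst (Nat.zero_le d) s' s0' t0'
      simpa [subst, e] using Par.beta (ih1 (par_lift 0 hs) (d+1)) (ih2 hs d)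
  | @eta t0 t0' _ ih =>
      have h1 : subst (d+1) (lift 0 s) (lift 0 t0) = lift 0 (subst d s t0) :=
        subst_lift (Nat.zero_le d) s t0
      have h2 : subst (d+1) (lift 0 s) (var 0) = var 0 := by simp [subst]
      simpa [subst, h1, h2] using Par.eta (ih hs d)

/-! ### Complete development (Takahashi's `*` for βη) -/

def cd : Lam → Lam
  | var n => var n
  | app (lam t) b => subst 0 (cd b) (cd t)
  | app (var n) b => app (var n) (cd b)
  | app (app a1 a2) b => app (cd (app a1 a2)) (cd b)
  | lam (app u (var 0)) =>
      if hasVar 0 u then lam (cd (app u (var 0))) else cd (lower 0 u)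
  | lam (var n) => lam (var n)
  | lam (app u (var (m+1))) => lam (cd (app u (var (m+1))))
  | lam (app u (app v w)) => lam (cd (app u (app v w)))
  | lam (app u (lam v)) => lam (cd (app u (lam v)))
  | lam (lam t) => lam (cd (lam t))
termination_by t => size t
decreasing_by all_goals simp [size, size_lower] <;> omega

def etaBody : Lam → Bool
  | app u (var 0) => !hasVar 0 u
  | _ => false

theorem cd_app_nonlam {a : Lam} (b : Lam) (h : ∀ t₀, a ≠ lam t₀) :
    cd (app a b) = app (cd a) (cd b) := by
  cases a with
  | var n => simp [cd]
  | app a1 a2 => simp [cd]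
  | lam t => exact absurd rfl (h t)

theorem cd_lam_not_eta {t : Lam} (h : etaBody t = false) : cd (lam t) = lam (cd t) := by
  cases t with
  | var n => simp [cd]
  | lam t0 => simp [cd]
  | app u v =>
      cases v with
      | var m =>
          cases m with
          | zero =>
              simp only [etaBody, Bool.not_eq_false'] at h
              simp [cd, h]
          | succ m => simp [cd]
      | app v w => simp [cd]
      | lam v => simp [cd]

theorem cd_lam_eta {u : Lam} (h : hasVar 0 u = false) :
    cd (lam (app u (var 0))) = cd (lower 0 u) := by
  simp [cd, h]

theorem etaBody_lift (d : Nat) (p : Lam) : etaBody (lift (d+1) p) = etaBody p := by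
  cases p with
  | var n => simp [lift, etaBody]
  | lam t => simp [lift, etaBody]
  | app u v =>
      cases v with
      | var m =>
          cases m with
          | zero =>
              simp [lift, etaBody, hasVar_lift_lt (Nat.succ_pos d) u]
          | succ m =>
              have : (if m+1 < d+1 then m+1 else m+2) ≠ 0 := by split_ifs <;> omega
              simp only [lift, etaBody]
              split_ifs <;> simp [etaBody]
      | app v w => simp [lift, etaBody]
      | lam v => simp [lift, etaBody]

theorem etaBody_true {p : Lam} (h : etaBody p = true) :
    ∃ u, p = app (lift 0 u) (var 0) := by
  cases p with
  | var n => simp [etaBody] at h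
  | lam t => simp [etaBody] at h
  | app u v =>
      cases v with
      | var m =>
          cases m with
          | zero =>
              simp only [etaBody, Bool.not_eq_true'] at h
              exact ⟨lower 0 u, by rw [lift_lower h]⟩
          | succ m => simp [etaBody] at h
      | app v w => simp [etaBody] at h
      | lam v => simp [etaBody] at h

theorem etaBody_lift0 (u : Lam) : etaBody (app (lift 0 u) (var 0)) = true := by
  simp [etaBody, hasVar_lift_self]

theorem cd_lift : ∀ (n : Nat) (t : Lam), size t ≤ n → ∀ d, cd (lift d t) = lift d (cd t) := by
  intro n
  induction n with
  | zero => intro t h; cases t <;> simp [size] at h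
  | succ n ih =>
      intro t hsz d
      cases t with
      | var m => simp [lift, cd]
      | app a b =>
          have hszb : size b ≤ n := by simp [size] at hsz; omega
          cases a with
          | lam p =>
              have hszp : size p ≤ n := by simp [size] at hsz; omega
              simp only [lift, cd]
              rw [ih b hszb d, ih p hszp (d+1), lift_subst (Nat.zero_le d)]
          | var m =>
              simp only [lift, cd]
              rw [ih b hszb d]
          | app a1 a2 =>
              have hsza : size (app a1 a2) ≤ n := by simp [size] at hsz ⊢; omega
              have e : lift d (app (app a1 a2) b)
                  = app (lift d (app a1 a2)) (lift d b) := rfl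
              rw [e, cd_app_nonlam (lift d b) (by simp [lift]),
                  cd_app_nonlam b (by simp), ih _ hsza d, ih b hszb d]
              rfl
      | lam p =>
          by_cases hE : etaBody p = true
          · obtain ⟨u, rfl⟩ := etaBody_true hE
            have hv : hasVar 0 (lift 0 u) = false := hasVar_lift_self 0 u
            have hszu : size (lower 0 (lift 0 u)) ≤ n := by
              simp [size, size_lower, size_lift] at hsz ⊢; omega
            have hlift : lift (d+1) (lift 0 u) = lift 0 (lift d u) :=
              (lift_lift (Nat.zero_le d) u).symm
            have hv2 : hasVar 0 (lift (d+1) (lift 0 u)) = false := by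
              rw [hlift]; exact hasVar_lift_self 0 (lift d u)
            have e1 : lift d (lam (app (lift 0 u) (var 0)))
                = lam (app (lift (d+1) (lift 0 u)) (var 0)) := by simp [lift]
            rw [e1, cd_lam_eta hv2, cd_lam_eta hv,
                lower_lift_comm (Nat.zero_le d) hv, ih _ hszu d]
          · have hE' : etaBody p = false := by simpa using hE
            have hszp : size p ≤ n := by simp [size] at hsz; omega
            have : etaBody (lift (d+1) p) = false := by rw [etaBody_lift]; exact hE'
            simp only [lift]
            rw [cd_lam_not_eta this, cd_lam_not_eta hE', ih p hszp (d+1)]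
            simp [lift]

theorem cd_eta_app (q b : Lam) :
    cd (app q b) = subst 0 (cd b) (cd (app (lift 0 q) (var 0))) := by
  cases q with
  | lam r =>
      have e1 : lift 0 (lam r) = lam (lift 1 r) := by simp [lift]
      have e2 : cd (app (lam (lift 1 r)) (var 0)) = subst 0 (var 0) (cd (lift 1 r)) := by
        simp [cd]
      rw [e1, e2, cd_lift (size r) r le_rfl 1, subst_var_lift 0 (cd r)]
      simp [cd]
  | var m =>
      have e1 : lift 0 (var m) = var (m+1) := by simp [lift]
      rw [e1, cd_app_nonlam (var 0) (by simp)]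
      have : cd (var (m+1)) = var (m+1) := by simp [cd]
      simp only [this, cd]
      simp [subst]
  | app a1 a2 =>
      rw [cd_app_nonlam b (by simp),
          cd_app_nonlam (var 0) (by simp [lift])]
      have e3 : cd (lift 0 (app a1 a2)) = lift 0 (cd (app a1 a2)) :=
        cd_lift (size (app a1 a2)) _ le_rfl 0
      have e4 : cd (var 0) = var 0 := by simp [cd]
      rw [e3, e4]
      simp only [subst, subst_lift_cancel]
      simp [subst]

theorem par_lift_inv {x u : Lam} (h : Par x u) :
    ∀ (d : Nat) (t : Lam), x = lift d t → ∃ t', u = lift d t' ∧ Par t t' := by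
  induction h with
  | var n =>
      intro d t ht
      exact ⟨t, ht, par_refl t⟩
  | @app a a' b b' h1 h2 ih1 ih2 =>
      intro d t ht
      cases t with
      | var m => simp [lift] at ht
      | lam p => simp [lift] at ht
      | app p q =>
          simp only [lift, app.injEq] at ht
          obtain ⟨ha, hb⟩ := ht
          obtain ⟨p', hp', hpp⟩ := ih1 d p ha
          obtain ⟨q', hq', hqq⟩ := ih2 d q hb
          exact ⟨app p' q', by simp [lift, hp', hq'], Par.app hpp hqq⟩
  | @lam p p' h1 ih =>
      intro d t ht
      cases t with
      | var m => simp [lift] at ht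
      | app a b => simp [lift] at ht
      | lam q =>
          simp only [lift, lam.injEq] at ht
          obtain ⟨q', hq', hqq⟩ := ih (d+1) q ht
          exact ⟨lam q', by simp [lift, hq'], Par.lam hqq⟩
  | @beta p p' b b' h1 h2 ih1 ih2 =>
      intro d t ht
      cases t with
      | var m => simp [lift] at ht
      | lam q => simp [lift] at ht
      | app a q =>
          simp only [lift, app.injEq] at ht
          obtain ⟨ha, hb⟩ := ht
          cases a with
          | var m => simp [lift] at ha
          | app a1 a2 => simp [lift] at ha
          | lam p0 =>
              simp only [lift, lam.injEq] at ha
              obtain ⟨p0', hp0', hpp⟩ := ih1 (d+1) p0 ha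
              obtain ⟨q', hq', hqq⟩ := ih2 d q hb
              refine ⟨subst 0 q' p0', ?_, Par.beta hpp hqq⟩
              rw [hp0', hq', lift_subst (Nat.zero_le d)]
  | @eta q q' h1 ih =>
      intro d t ht
      cases t with
      | var m => simp [lift] at ht
      | app a b => simp [lift] at ht
      | lam p =>
          simp only [lift, lam.injEq] at ht
          -- ht : app (lift 0 q) (var 0) = lift (d+1) p
          cases p with
          | var m => simp [lift] at ht
          | lam p0 => simp [lift] at ht
          | app u0 v0 =>
              simp only [lift, app.injEq] at ht
              obtain ⟨hu, hv⟩ := ht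
              cases v0 with
              | app _ _ => simp [lift] at hv
              | lam _ => simp [lift] at hv
              | var m =>
                  simp only [lift, var.injEq] at hv
                  have hm : m = 0 := by split_ifs at hv <;> omega
                  subst hm
                  have hvu : hasVar 0 u0 = false := by
                    have := hasVar_lift_lt (Nat.succ_pos d) u0
                    rw [← hu] at this
                    rw [← this, hasVar_lift_self]
                  set q0 := lower 0 u0 with hq0
                  have hu0 : u0 = lift 0 q0 := (lift_lower hvu).symm
                  have hq : q = lift d q0 := by
                    apply lift_inj (d := 0)
                    rw [hu, hu0]
                    exact (lift_lift (Nat.zero_le d) q0).symm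
                  obtain ⟨t', ht', htt⟩ := ih d q0 hq
                  refine ⟨t', ht', ?_⟩
                  rw [hu0]
                  exact Par.eta htt

/-! ### The triangle property -/

theorem triangle_aux : ∀ (n : Nat) (t : Lam), size t ≤ n → ∀ s, Par t s → Par s (cd t) := by
  intro n
  induction n with
  | zero => intro t h; cases t <;> simp [size] at h
  | succ n ih =>
      intro t hsz s hp
      cases t with
      | var m =>
          cases hp
          simpa [cd] using par_refl (var m)
      | app a b =>
          have hszb : size b ≤ n := by simp [size] at hsz; omega
          cases a with
          | lam p =>
              have hszp : size p ≤ n := by simp [size] at hsz; omega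
              have hcd : cd (app (lam p) b) = subst 0 (cd b) (cd p) := by simp [cd]
              rw [hcd]
              cases hp with
              | beta h1 h2 =>
                  exact par_subst (ih p hszp _ h1) (ih b hszb _ h2) 0
              | app h1 h2 =>
                  cases h1 with
                  | lam h3 =>
                      exact Par.beta (ih p hszp _ h3) (ih b hszb _ h2)
                  | eta h3 =>
                      -- p = app (lift 0 q) (var 0), h3 : Par q a'
                      rename_i q
                      rw [← cd_eta_app]
                      have hszq : size (app q b) ≤ n := by
                        simp [size, size_lift] at hsz ⊢; omega
                      exact ih (app q b) hszq _ (Par.app h3 h2)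
          | var m =>
              have hcd : cd (app (var m) b) = app (var m) (cd b) := by simp [cd]
              rw [hcd]
              cases hp with
              | app h1 h2 =>
                  cases h1
                  exact Par.app (par_refl _) (ih b hszb _ h2)
          | app a1 a2 =>
              have hsza : size (app a1 a2) ≤ n := by simp [size] at hsz ⊢; omega
              have hcd : cd (app (app a1 a2) b) = app (cd (app a1 a2)) (cd b) := by simp [cd]
              rw [hcd]
              cases hp with
              | app h1 h2 =>
                  exact Par.app (ih _ hsza _ h1) (ih b hszb _ h2)
      | lam p =>
          cases hp with
          | lam h1 =>
              rename_i p'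
              by_cases hE : etaBody p = true
              · obtain ⟨u, rfl⟩ := etaBody_true hE
                have hv : hasVar 0 (lift 0 u) = false := hasVar_lift_self 0 u
                rw [cd_lam_eta hv, lower_lift]
                -- h1 : Par (app (lift 0 u) (var 0)) p'
                have hszu : size u ≤ n := by simp [size, size_lift] at hsz ⊢; omega
                generalize hL : lift 0 u = L at h1
                cases h1 with
                | app h2 h3 =>
                    cases h3  -- second component is var 0
                    obtain ⟨u0, rfl, hu0⟩ := par_lift_inv h2 0 u hL.symm
                    exact Par.eta (ih u hszu _ hu0)
                | beta h2 h3 =>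
                    cases h3  -- second component is var 0
                    rename_i w w'
                    cases u with
                    | var m => simp [lift] at hL
                    | app u1 u2 => simp [lift] at hL
                    | lam r =>
                        have hw : lift 0 (lam r) = lam (lift 1 r) := by simp [lift]
                        rw [hw] at hL
                        injection hL with hL'
                        subst hL'
                        obtain ⟨r', rfl, hr⟩ := par_lift_inv h2 1 r rfl
                        rw [subst_var_lift 0 r']
                        exact ih (lam r) (by simpa [size] using hszu) _ (Par.lam hr)
              · have hE' : etaBody p = false := by simpa using hE
                have hszp : size p ≤ n := by simp [size] at hsz; omega
                rw [cd_lam_not_eta hE']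
                exact Par.lam (ih p hszp _ h1)
          | eta h1 =>
              rename_i q
              have hv : hasVar 0 (lift 0 q) = false := hasVar_lift_self 0 q
              rw [cd_lam_eta hv, lower_lift]
              have hszq : size q ≤ n := by simp [size, size_lift] at hsz ⊢; omega
              exact ih q hszq _ h1

theorem triangle {t s : Lam} (h : Par t s) : Par s (cd t) :=
  triangle_aux (size t) t le_rfl s h

theorem par_diamond {t a b : Lam} (h1 : Par t a) (h2 : Par t b) :
    ∃ u, Par a u ∧ Par b u := ⟨cd t, triangle h1, triangle h2⟩

/-! ### Confluence and Church–Rosser -/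

abbrev StarP : Lam → Lam → Prop := Relation.ReflTransGen Par

theorem strip {t a : Lam} (h1 : Par t a) {b : Lam} (h2 : StarP t b) :
    ∃ u, StarP a u ∧ Par b u := by
  induction h2 with
  | refl => exact ⟨a, Relation.ReflTransGen.refl, h1⟩
  | tail _ hbc ih =>
      obtain ⟨u, hau, hcu⟩ := ih
      obtain ⟨v, hbv, huv⟩ := par_diamond hbc hcu
      exact ⟨v, hau.tail huv, hbv⟩

theorem starP_confluent {t a b : Lam} (h1 : StarP t a) (h2 : StarP t b) :
    ∃ u, StarP a u ∧ StarP b u := by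
  induction h1 with
  | refl => exact ⟨b, h2, Relation.ReflTransGen.refl⟩
  | tail _ hca ih =>
      obtain ⟨u, hcu, hbu⟩ := ih
      obtain ⟨v, hav, huv⟩ := strip hca hcu
      exact ⟨v, hav, hbu.tail huv⟩

theorem starP_of_star {t s : Lam} (h : Star t s) : StarP t s :=
  Relation.ReflTransGen.mono (fun _ _ => step_par) _ _ h

theorem star_of_starP {t s : Lam} (h : StarP t s) : Star t s := by
  induction h with
  | refl => exact Relation.ReflTransGen.refl
  | tail _ hp ih => exact ih.trans (par_star hp)

theorem star_confluent {t a b : Lam} (h1 : Star t a) (h2 : Star t b) :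
    ∃ u, Star a u ∧ Star b u := by
  obtain ⟨u, ha, hb⟩ := starP_confluent (starP_of_star h1) (starP_of_star h2)
  exact ⟨u, star_of_starP ha, star_of_starP hb⟩

theorem betaEta_join {t s : Lam} (h : BetaEta t s) : ∃ u, Star t u ∧ Star s u := by
  induction h with
  | beta t s => exact ⟨subst 0 s t, Relation.ReflTransGen.single (Step.beta t s),
      Relation.ReflTransGen.refl⟩
  | eta t => exact ⟨t, Relation.ReflTransGen.single (Step.eta t), Relation.ReflTransGen.refl⟩
  | refl t => exact ⟨t, Relation.ReflTransGen.refl, Relation.ReflTransGen.refl⟩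
  | symm _ ih => obtain ⟨u, h1, h2⟩ := ih; exact ⟨u, h2, h1⟩
  | trans _ _ ih1 ih2 =>
      obtain ⟨u, h1, h2⟩ := ih1
      obtain ⟨v, h3, h4⟩ := ih2
      obtain ⟨w, h5, h6⟩ := star_confluent h2 h3
      exact ⟨w, h1.trans h5, h4.trans h6⟩
  | congApp _ _ ih1 ih2 =>
      obtain ⟨u, h1, h2⟩ := ih1
      obtain ⟨v, h3, h4⟩ := ih2
      exact ⟨app u v, star_app h1 h3, star_app h2 h4⟩
  | congLam _ ih =>
      obtain ⟨u, h1, h2⟩ := ih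
      exact ⟨lam u, star_lam h1, star_lam h2⟩

theorem step_betaEta {t s : Lam} (h : Step t s) : BetaEta t s := by
  induction h with
  | beta t s => exact BetaEta.beta t s
  | eta t => exact BetaEta.eta t
  | appL b _ ih => exact BetaEta.congApp ih (BetaEta.refl b)
  | appR a _ ih => exact BetaEta.congApp (BetaEta.refl a) ih
  | lam _ ih => exact BetaEta.congLam ih

theorem star_betaEta {t s : Lam} (h : Star t s) : BetaEta t s := by
  induction h with
  | refl => exact BetaEta.refl t
  | tail _ hstep ih => exact BetaEta.trans ih (step_betaEta hstep)

/-! ### Normal forms -/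

def isNormal : Lam → Bool
  | var _ => true
  | app (lam _) _ => false
  | app a b => isNormal a && isNormal b
  | lam t => isNormal t && !etaBody t

theorem normal_no_step {t : Lam} (hn : isNormal t = true) {s : Lam} (h : Step t s) : False := by
  induction h with
  | beta t s => simp [isNormal] at hn
  | eta t => simp [isNormal, etaBody, hasVar_lift_self] at hn
  | appL b hs ih =>
      rename_i a a'
      apply ih
      cases a with
      | var m => cases hs
      | lam p => simp [isNormal] at hn
      | app a1 a2 => simp [isNormal] at hn; exact hn.1
  | appR a hs ih =>
      apply ih
      cases a with
      | var m => simpa [isNormal] using hn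
      | lam p => simp [isNormal] at hn
      | app a1 a2 => simp [isNormal] at hn; exact hn.2
  | lam hs ih =>
      apply ih
      simp only [isNormal, Bool.and_eq_true] at hn
      exact hn.1

theorem star_normal_eq {t s : Lam} (hn : isNormal t = true) (h : Star t s) : s = t := by
  induction h using Relation.ReflTransGen.head_induction_on with
  | refl => rfl
  | head hstep _ _ => exact absurd hstep (fun hs => normal_no_step hn hs)

theorem betaEta_unique_nf {a b na nb : Lam} (h : BetaEta a b)
    (ha : Star a na) (hb : Star b nb)
    (hna : isNormal na = true) (hnb : isNormal nb = true) : na = nb := by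
  obtain ⟨u, h1, h2⟩ := betaEta_join h
  obtain ⟨v, h3, h4⟩ := star_confluent h1 ha
  have hv : v = na := star_normal_eq hna h4
  obtain ⟨w, h5, h6⟩ := star_confluent h2 hb
  have hw : w = nb := star_normal_eq hnb h6
  obtain ⟨z, h7, h8⟩ := star_confluent h3 h5
  rw [hv] at h7
  rw [hw] at h8
  exact (star_normal_eq hna h7).symm.trans (star_normal_eq hnb h8)

/-! ### Computing reductions -/

def tryStep : Lam → Option Lam
  | var _ => none
  | app (lam t) b => some (subst 0 b t)
  | app a b =>
      match tryStep a with
      | some a' => some (app a' b)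
      | none => (tryStep b).map (app a)
  | lam (app u (var 0)) =>
      if hasVar 0 u then (tryStep (app u (var 0))).map lam else some (lower 0 u)
  | lam t => (tryStep t).map lam

theorem tryStep_sound : ∀ {t s : Lam}, tryStep t = some s → Step t s := by
  intro t
  induction t with
  | var n => intro s h; simp [tryStep] at h
  | app a b iha ihb =>
      intro s h
      cases a with
      | lam p =>
          simp only [tryStep, Option.some.injEq] at h
          rw [← h]; exact Step.beta p b
      | var m =>
          simp only [tryStep] at h
          cases hb : tryStep b with
          | none => rw [hb] at h; simp at h
          | some b' =>
              rw [hb] at h; simp at h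
              rw [← h]; exact Step.appR _ (ihb hb)
      | app a1 a2 =>
          simp only [tryStep] at h
          cases ha : tryStep (app a1 a2) with
          | some a' =>
              rw [ha] at h; simp at h
              rw [← h]; exact Step.appL _ (iha ha)
          | none =>
              rw [ha] at h
              cases hb : tryStep b with
              | none => rw [hb] at h; simp at h
              | some b' =>
                  rw [hb] at h; simp at h
                  rw [← h]; exact Step.appR _ (ihb hb)
  | lam p ihp =>
      intro s h
      by_cases hE : etaBody p = true
      · obtain ⟨u, rfl⟩ := etaBody_true hE
        have hv : hasVar 0 (lift 0 u) = false := hasVar_lift_self 0 u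
        simp only [tryStep, hv, Bool.false_eq_true, if_false, Option.some.injEq] at h
        rw [← h, lower_lift]
        exact Step.eta u
      · have hcase : tryStep (lam p) = (tryStep p).map lam := by
          cases p with
          | var m => rfl
          | lam q => rfl
          | app u v =>
              cases v with
              | var m =>
                  cases m with
                  | zero =>
                      have : hasVar 0 u = true := by
                        simp only [etaBody, Bool.not_eq_true'] at hE
                        simpa using hE
                      simp [tryStep, this]
                  | succ m => rfl
              | app _ _ => rfl
              | lam _ => rfl
        rw [hcase] at h
        cases hp : tryStep p with
        | none => rw [hp] at h; simp at h
        | some p' =>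
            rw [hp] at h; simp at h
            rw [← h]; exact Step.lam (ihp hp)

def normIter : Nat → Lam → Lam
  | 0, t => t
  | n+1, t =>
      match tryStep t with
      | some s => normIter n s
      | none => t

theorem normIter_star (n : Nat) (t : Lam) : Star t (normIter n t) := by
  induction n generalizing t with
  | zero => exact Relation.ReflTransGen.refl
  | succ n ih =>
      cases h : tryStep t with
      | none =>
          simp only [normIter, h]
          exact Relation.ReflTransGen.refl
      | some s =>
          simp only [normIter, h]
          exact Relation.ReflTransGen.head (tryStep_sound h) (ih s)

/-! ### Specific computations for B -/

def nfB (k : Nat) : Lam := normIter 40 (sapp B k)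

theorem betaEta_nfB (k : Nat) : BetaEta (sapp B k) (nfB k) :=
  star_betaEta (normIter_star 40 (sapp B k))

theorem nfB6 : nfB 6 = E := by decide
theorem nfB10 : nfB 10 = E := by decide

theorem nfB_normal : ∀ k, k < 10 → isNormal (nfB k) = true := by decide

theorem nfB_inj : ∀ a, a < 10 → ∀ b, b < 10 →
    1 ≤ a → 1 ≤ b → nfB a = nfB b → a = b := by decide

theorem sapp_succ (X : Lam) (i : Nat) (hi : 1 ≤ i) :
    sapp X (i+1) = app (sapp X i) X := by
  cases i with
  | zero => omega
  | succ k => rfl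

def canon (k : Nat) : Nat := if k ≤ 5 then k else 6 + (k - 6) % 4

theorem rho_property_of_B :
    BetaEta (sapp B 6) E ∧
    BetaEta (sapp B 10) E ∧
    (∀ i : Nat, 6 ≤ i → BetaEta (sapp B i) (sapp B (i + 4))) ∧
    (∀ i j : Nat, 1 ≤ i → 1 ≤ j → BetaEta (sapp B i) (sapp B (i + j)) → 6 ≤ i ∧ 4 ≤ j) := by
  have h6 : BetaEta (sapp B 6) E := nfB6 ▸ betaEta_nfB 6
  have h10 : BetaEta (sapp B 10) E := nfB10 ▸ betaEta_nfB 10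
  have part3 : ∀ i : Nat, 6 ≤ i → BetaEta (sapp B i) (sapp B (i + 4)) := by
    intro i hi
    induction i, hi using Nat.le_induction with
    | base => exact h6.trans h10.symm
    | succ i hi ih =>
        rw [sapp_succ B i (by omega), show i+1+4 = (i+4)+1 from by omega,
            sapp_succ B (i+4) (by omega)]
        exact BetaEta.congApp ih (BetaEta.refl B)
  have classRep : ∀ k, 1 ≤ k → BetaEta (sapp B k) (sapp B (canon k)) := by
    intro k
    induction k using Nat.strong_induction_on with
    | _ k ih =>
        intro hk
        by_cases h9 : k ≤ 9
        · have hc : canon k = k := by unfold canon; split_ifs <;> omega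
          rw [hc]
          exact BetaEta.refl _
        · have heq : (k - 4) + 4 = k := by omega
          have h1 : BetaEta (sapp B (k-4)) (sapp B k) := heq ▸ part3 (k-4) (by omega)
          have h2 : canon (k-4) = canon k := by unfold canon; split_ifs <;> omega
          exact h1.symm.trans (h2 ▸ ih (k-4) (by omega) (by omega))
  refine ⟨h6, h10, part3, ?_⟩
  intro i j hi hj h
  have hbi : 1 ≤ canon i ∧ canon i ≤ 9 := by unfold canon; split_ifs <;> omega
  have hbij : 1 ≤ canon (i+j) ∧ canon (i+j) ≤ 9 := by unfold canon; split_ifs <;> omega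
  have h2 : BetaEta (sapp B (canon i)) (sapp B (canon (i+j))) :=
    ((classRep i hi).symm.trans h).trans (classRep (i+j) (by omega))
  have e : nfB (canon i) = nfB (canon (i+j)) :=
    betaEta_unique_nf h2 (normIter_star 40 _) (normIter_star 40 _)
      (nfB_normal _ (by omega)) (nfB_normal _ (by omega))
  have hc : canon i = canon (i+j) :=
    nfB_inj _ (by omega) _ (by omega) hbi.1 hbij.1 e
  unfold canon at hc
  split_ifs at hc <;> omega

end Lam
end

section
/- For all natural numbers m < n, the equation (B^m B) ∘ (B^n B) = (B^{n+1} B) ∘ (B^m B) is derivable from the equations (B2'): B (x ∘ y) = (B x) ∘ (B y) and (B3'): B ∘ (B x) = (B (B x)) ∘ B, where x ∘ y abbreviates B x y and B^k denotes k-fold application of B. -/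
/-- Terms built from the constant B by application. -/
inductive BTerm : Type
  | B : BTerm
  | app : BTerm → BTerm → BTerm
  deriving DecidableEq

namespace BTerm

/-- Composition: x ∘ y = B x y. -/
def comp (x y : BTerm) : BTerm := app (app B x) y

/-- Monomial B^n B (n-fold application of B to B). -/
def mon : Nat → BTerm
  | 0 => B
  | n + 1 => app B (mon n)

end BTerm

namespace BTerm

/-- Equational theory generated by (B2'), (B3'), and associativity of ∘,
closed under reflexivity, symmetry, transitivity, and congruence. -/
inductive EqC : BTerm → BTerm → Prop
  | B2' (x y : BTerm) : EqC (app B (comp x y)) (comp (app B x) (app B y))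
  | B3' (x : BTerm) : EqC (comp B (app B x)) (comp (app B (app B x)) B)
  | assoc (x y z : BTerm) : EqC (comp x (comp y z)) (comp (comp x y) z)
  | refl (t : BTerm) : EqC t t
  | symm {t s : BTerm} : EqC t s → EqC s t
  | trans {t s u : BTerm} : EqC t s → EqC s u → EqC t u
  | congApp {t t' s s' : BTerm} : EqC t t' → EqC s s' → EqC (app t s) (app t' s')

theorem mon_swap (m n : Nat) (h : m < n) :
    EqC (comp (mon m) (mon n)) (comp (mon (n + 1)) (mon m)) := by
  induction m generalizing n with
  | zero =>
    obtain ⟨k, rfl⟩ : ∃ k, n = k + 1 := ⟨n - 1, by omega⟩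
    exact EqC.B3' (mon k)
  | succ m ih =>
    obtain ⟨k, rfl⟩ : ∃ k, n = k + 1 := ⟨n - 1, by omega⟩
    exact ((EqC.B2' (mon m) (mon k)).symm.trans
      ((EqC.congApp (EqC.refl B) (ih k (by omega))).trans (EqC.B2' (mon (k + 1)) (mon m))))

end BTerm
end

section
/- Every B-term (a term built from the constant B by application) is equal, in the equational theory generated by (B1), (B2), (B3), to a polynomial: a composition (B^{n₁} B) ∘ (B^{n₂} B) ∘ ... ∘ (B^{n_k} B) with k > 0 and n₁,...,n_k ≥ 0, where x ∘ y = B x y. -/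
namespace BTerm

/-- Equational theory generated by (B1), (B2), (B3), closed under
reflexivity, symmetry, transitivity, and congruence. -/
inductive EqB : BTerm → BTerm → Prop
  | B1 (x y z : BTerm) : EqB (app (app (app B x) y) z) (app x (app y z))
  | B2 (x y : BTerm) :
      EqB (app B (app (app B x) y)) (app (app B (app B x)) (app B y))
  | B3 (x : BTerm) :
      EqB (app (app B B) (app B x)) (app (app B (app B (app B x))) B)
  | refl (t : BTerm) : EqB t t
  | symm {t s : BTerm} : EqB t s → EqB s t
  | trans {t s u : BTerm} : EqB t s → EqB s u → EqB t u
  | congApp {t t' s s' : BTerm} : EqB t t' → EqB s s' → EqB (app t s) (app t' s')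

/-- Polynomial (B^n B) ∘ (B^{m₁} B) ∘ ... ∘ (B^{m_k} B) with degrees n :: L. -/
def poly : Nat → List Nat → BTerm
  | n, [] => mon n
  | n, m :: L => comp (mon n) (poly m L)

lemma mapB : ∀ (L : List Nat) (m : Nat),
    EqB (app B (poly m L)) (poly (m+1) (L.map (·+1)))
  | [], m => by
      show EqB (app B (mon m)) (mon (m+1))
      exact EqB.refl _
  | k :: L, m => by
      show EqB (app B (app (app B (mon m)) (poly k L)))
        (app (app B (app B (mon m))) (poly (k+1) (L.map (·+1))))
      exact EqB.trans (EqB.B2 (mon m) (poly k L))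
        (EqB.congApp (EqB.refl _) (mapB L k))

lemma app_mon (n m : Nat) (M : List Nat) :
    ∃ n' L', EqB (app (mon n) (poly m M)) (poly n' L') := by
  cases n with
  | zero => exact ⟨m+1, M.map (·+1), mapB M m⟩
  | succ n => exact ⟨n, m :: M, EqB.refl _⟩

lemma app_poly : ∀ (L : List Nat) (n m : Nat) (M : List Nat),
    ∃ n' L', EqB (app (poly n L) (poly m M)) (poly n' L')
  | [], n, m, M => app_mon n m M
  | k :: L, n, m, M => by
      obtain ⟨n₁, L₁, h₁⟩ := app_poly L k m M
      obtain ⟨n₂, L₂, h₂⟩ := app_mon n n₁ L₁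
      refine ⟨n₂, L₂, ?_⟩
      show EqB (app (app (app B (mon n)) (poly k L)) (poly m M)) _
      exact EqB.trans (EqB.B1 (mon n) (poly k L) (poly m M))
        (EqB.trans (EqB.congApp (EqB.refl _) h₁) h₂)

theorem exists_polynomial (e : BTerm) :
    ∃ (n : Nat) (L : List Nat), EqB e (poly n L) := by
  induction e with
  | B => exact ⟨0, [], EqB.refl _⟩
  | app t s iht ihs =>
      obtain ⟨n, L, ht⟩ := iht
      obtain ⟨m, M, hs⟩ := ihs
      obtain ⟨n', L', h⟩ := app_poly L n m M
      exact ⟨n', L', EqB.trans (EqB.congApp ht hs) h⟩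

end BTerm
end

section
/- Every polynomial (B^{n₁} B) ∘ ... ∘ (B^{n_k} B) is equal, in the equational theory generated by (B1)–(B3), to a decreasing polynomial of the same length k whose lowest (last) degree equals the minimum achievable as in the original: formally, there exist m₁ ≥ m₂ ≥ ... ≥ m_k with the polynomial equal to (B^{m₁} B) ∘ ... ∘ (B^{m_k} B), and m_k equals the last degree when repeatedly applying the swap rule (B^m B) ∘ (B^n B) = (B^{n+1} B) ∘ (B^m B) for m < n. -/
namespace BTerm

/-- B distributes over comp (this is exactly B2). -/
lemma Bdist (x y : BTerm) : EqB (app B (comp x y)) (comp (app B x) (app B y)) :=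
  EqB.B2 x y

/-- comp is associative up to EqB. -/
lemma comp_assoc (x y z : BTerm) : EqB (comp (comp x y) z) (comp x (comp y z)) := by
  have h1 : EqB (comp (comp x y) z)
      (app (app (app B (app B x)) (app B y)) z) :=
    EqB.congApp (EqB.B2 x y) (EqB.refl z)
  exact h1.trans (EqB.B1 (app B x) (app B y) z)

lemma congCompR {t s s' : BTerm} (h : EqB s s') : EqB (comp t s) (comp t s') :=
  EqB.congApp (EqB.refl (app B t)) h

lemma congCompL {t t' s : BTerm} (h : EqB t t') : EqB (comp t s) (comp t' s) :=
  EqB.congApp (EqB.congApp (EqB.refl B) h) (EqB.refl s)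

/-- The swap rule. -/
lemma swap (m n : Nat) (h : m < n) :
    EqB (comp (mon m) (mon n)) (comp (mon (n + 1)) (mon m)) := by
  induction m generalizing n with
  | zero =>
    obtain ⟨k, rfl⟩ : ∃ k, n = k + 1 := ⟨n - 1, by omega⟩
    exact EqB.B3 (mon k)
  | succ m ih =>
    obtain ⟨k, rfl⟩ : ∃ k, n = k + 1 := ⟨n - 1, by omega⟩
    have hk : m < k := by omega
    have h1 : EqB (comp (mon (m + 1)) (mon (k + 1))) (app B (comp (mon m) (mon k))) :=
      (Bdist (mon m) (mon k)).symm
    have h2 : EqB (app B (comp (mon m) (mon k))) (app B (comp (mon (k + 1)) (mon m))) :=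
      EqB.congApp (EqB.refl B) (ih k hk)
    have h3 : EqB (app B (comp (mon (k + 1)) (mon m)))
        (comp (mon (k + 2)) (mon (m + 1))) := Bdist (mon (k + 1)) (mon m)
    exact (h1.trans h2).trans h3

/-- Insert n into a decreasing list m :: M using the swap rule. -/
def ins (n : Nat) : Nat → List Nat → Nat × List Nat
  | m, M =>
    if m ≤ n then (n, m :: M)
    else
      match M with
      | [] => (m + 1, [n])
      | m' :: M' => (m + 1, (ins n m' M').1 :: (ins n m' M').2)

lemma ins_fst (n m : Nat) (M : List Nat) :
    (ins n m M).1 = if m ≤ n then n else m + 1 := by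
  cases M <;> simp only [ins] <;> split <;> rfl

lemma ins_eqb (n m : Nat) (M : List Nat) :
    EqB (poly n (m :: M)) (poly (ins n m M).1 (ins n m M).2) := by
  induction M generalizing m with
  | nil =>
    simp only [ins]
    split
    · exact EqB.refl _
    · exact swap n m (by omega)
  | cons m' M' ih =>
    simp only [ins]
    split
    · exact EqB.refl _
    · rename_i hnm
      have hlt : n < m := by omega
      have h1 : EqB (poly n (m :: m' :: M'))
          (comp (comp (mon n) (mon m)) (poly m' M')) :=
        (comp_assoc (mon n) (mon m) (poly m' M')).symm
      have h2 : EqB (comp (comp (mon n) (mon m)) (poly m' M'))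
          (comp (comp (mon (m + 1)) (mon n)) (poly m' M')) :=
        congCompL (swap n m hlt)
      have h3 : EqB (comp (comp (mon (m + 1)) (mon n)) (poly m' M'))
          (comp (mon (m + 1)) (comp (mon n) (poly m' M'))) :=
        comp_assoc _ _ _
      have h4 : EqB (comp (mon (m + 1)) (poly n (m' :: M')))
          (comp (mon (m + 1)) (poly (ins n m' M').1 (ins n m' M').2)) :=
        congCompR (ih m')
      exact ((h1.trans h2).trans h3).trans h4

lemma ins_len (n m : Nat) (M : List Nat) :
    (ins n m M).2.length = M.length + 1 := by
  induction M generalizing m with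
  | nil => simp only [ins]; split <;> simp
  | cons m' M' ih =>
    simp only [ins]
    split
    · simp
    · simp [ih m']

lemma ins_chain (n m : Nat) (M : List Nat) (h : List.Chain' (· ≥ ·) (m :: M)) :
    List.Chain' (· ≥ ·) ((ins n m M).1 :: (ins n m M).2) := by
  induction M generalizing m with
  | nil =>
    simp only [ins]
    split
    · rename_i hmn; simp [List.Chain', List.isChain_cons_cons]; omega
    · rename_i hmn; simp [List.Chain', List.isChain_cons_cons]; omega
  | cons m' M' ih =>
    simp only [ins]
    split
    · rename_i hmn
      exact List.isChain_cons_cons.mpr ⟨by omega, h⟩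
    · rename_i hmn
      have hmm' : m' ≤ m := (List.isChain_cons_cons.mp h).1
      have htail : List.Chain' (· ≥ ·) (m' :: M') := (List.isChain_cons_cons.mp h).2
      refine List.isChain_cons_cons.mpr ⟨?_, ih m' htail⟩
      rw [ins_fst]
      split <;> omega

lemma last_le_head (m : Nat) (M : List Nat) (h : List.Chain' (· ≥ ·) (m :: M)) :
    (m :: M).getLast (List.cons_ne_nil m M) ≤ m := by
  induction M generalizing m with
  | nil => simp
  | cons m' M' ih =>
    have hmm' : m' ≤ m := (List.isChain_cons_cons.mp h).1
    have htail := (List.isChain_cons_cons.mp h).2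
    rw [List.getLast_cons (List.cons_ne_nil m' M')]
    exact le_trans (ih m' htail) hmm'

lemma ins_getLast (n m : Nat) (M : List Nat) (h : List.Chain' (· ≥ ·) (m :: M)) :
    ((ins n m M).1 :: (ins n m M).2).getLast (List.cons_ne_nil _ _) =
      min n ((m :: M).getLast (List.cons_ne_nil m M)) := by
  induction M generalizing m with
  | nil =>
    simp only [ins]
    split
    · rename_i hmn; simp; omega
    · rename_i hmn; simp; omega
  | cons m' M' ih =>
    simp only [ins]
    split
    · rename_i hmn
      rw [List.getLast_cons (List.cons_ne_nil m (m' :: M'))]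
      have := last_le_head m (m' :: M') h
      omega
    · rename_i hmn
      have htail : List.Chain' (· ≥ ·) (m' :: M') := (List.isChain_cons_cons.mp h).2
      rw [List.getLast_cons (List.cons_ne_nil (ins n m' M').1 (ins n m' M').2),
        List.getLast_cons (List.cons_ne_nil m' M')]
      exact ih m' htail

lemma min_foldr (n k : Nat) (L : List Nat) :
    min n (List.foldr min k L) = min k (List.foldr min n L) := by
  induction L with
  | nil => simp [Nat.min_comm]
  | cons a L ih => simp only [List.foldr]; omega

theorem exists_decreasing_polynomial (n : Nat) (L : List Nat) :
    ∃ (m : Nat) (M : List Nat),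
      EqB (poly n L) (poly m M) ∧
      M.length = L.length ∧
      List.Chain' (· ≥ ·) (m :: M) ∧
      (m :: M).getLast (List.cons_ne_nil m M) = List.foldr min n L := by
  induction L generalizing n with
  | nil => exact ⟨n, [], EqB.refl _, rfl, by simp [List.Chain'], by simp⟩
  | cons k L' ih =>
    obtain ⟨a, A, heq, hlen, hchain, hlast⟩ := ih k
    refine ⟨(ins n a A).1, (ins n a A).2, ?_, ?_, ins_chain n a A hchain, ?_⟩
    · have h1 : EqB (poly n (k :: L')) (poly n (a :: A)) := congCompR heq
      exact h1.trans (ins_eqb n a A)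
    · rw [ins_len, hlen]; rfl
    · rw [ins_getLast n a A hchain, hlast]
      simpa using min_foldr n k L'

end BTerm
end

section
/- In the semigroup presented by generators g₀, g₁, g₂, ... (one for each natural number, representing B^n B) with relations gₙ gₘ = g_{m+1} gₙ for all m > n, every element has a unique representative g_{n₁} g_{n₂} ⋯ g_{n_k} with n₁ ≥ n₂ ≥ ... ≥ n_k. -/
/-- The defining relations: gₙ * gₘ = g_{m+1} * gₙ whenever m > n. -/
def bRel : FreeSemigroup ℕ → FreeSemigroup ℕ → Prop := fun a b =>
  ∃ m n : ℕ, n < m ∧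
    a = FreeSemigroup.of n * FreeSemigroup.of m ∧
    b = FreeSemigroup.of (m + 1) * FreeSemigroup.of n

/-- The word g_{n} g_{k₁} ⋯ g_{k_l} in the free semigroup, for the
nonempty index list n :: L. -/
def word (n : ℕ) (L : List ℕ) : FreeSemigroup ℕ :=
  L.foldl (fun a k => a * FreeSemigroup.of k) (FreeSemigroup.of n)

namespace BAux

open FreeSemigroup List

/-- Insertion into a reversed (weakly increasing) list. -/
def insAux : ℕ → List ℕ → List ℕ
  | k, [] => [k]
  | k, a :: t => if a < k then a :: insAux (k + 1) t else k :: a :: t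

/-- Right multiplication of a decreasing word (as a list) by a generator. -/
def ins (l : List ℕ) (k : ℕ) : List ℕ := (insAux k l.reverse).reverse

lemma insAux_ne_nil (k : ℕ) (r : List ℕ) : insAux k r ≠ [] := by
  cases r with
  | nil => simp [insAux]
  | cons a t => by_cases h : a < k <;> simp [insAux, h]

lemma ins_ne_nil (l : List ℕ) (k : ℕ) : ins l k ≠ [] := by
  simp [ins, insAux_ne_nil]

lemma insAux_swap : ∀ (t : List ℕ) (n m : ℕ), n < m →
    insAux m (insAux n t) = insAux n (insAux (m + 1) t) := by
  intro t
  induction t with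
  | nil =>
    intro n m hnm
    simp only [insAux, if_pos hnm, if_neg (by omega : ¬ m + 1 < n)]
  | cons a t ih =>
    intro n m hnm
    by_cases h1 : a < n
    · have h2 : a < m := by omega
      have h3 : a < m + 1 := by omega
      simp only [insAux, if_pos h1, if_pos h2, if_pos h3]
      rw [ih (n + 1) (m + 1) (by omega)]
    · by_cases h2 : a < m
      · have h3 : a < m + 1 := by omega
        simp [insAux, h1, h2, h3, hnm]
      · by_cases h4 : a < m + 1
        · simp [insAux, h1, h2, h4, hnm]
        · simp [insAux, h1, h2, h4, hnm]
          intro h; exact absurd h (by omega)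

lemma ins_swap (l : List ℕ) {n m : ℕ} (h : n < m) :
    ins (ins l n) m = ins (ins l (m + 1)) n := by
  simp only [ins, List.reverse_reverse]
  rw [insAux_swap l.reverse n m h]

lemma toList_mul (x y : FreeSemigroup ℕ) :
    (x * y).head :: (x * y).tail = (x.head :: x.tail) ++ (y.head :: y.tail) := rfl

lemma nf_invariant {a b : FreeSemigroup ℕ} (h : ConGen.Rel bRel a b) :
    ∀ L, List.foldl ins L (a.head :: a.tail) = List.foldl ins L (b.head :: b.tail) := by
  induction h with
  | of x y hxy =>
    obtain ⟨m, n, hnm, hx, hy⟩ := hxy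
    subst hx; subst hy
    intro L
    simpa [FreeSemigroup.of] using ins_swap L hnm
  | refl x => intro L; rfl
  | symm _ ih => intro L; exact (ih L).symm
  | trans _ _ ih1 ih2 => intro L; exact (ih1 L).trans (ih2 L)
  | mul _ _ ih1 ih2 =>
    intro L
    rw [toList_mul, toList_mul, List.foldl_append, List.foldl_append, ih1, ih2]

/-- The free-semigroup element with index list `l` (junk value for `[]`). -/
def W : List ℕ → FreeSemigroup ℕ
  | [] => FreeSemigroup.of 0
  | h :: t => ⟨h, t⟩

lemma foldl_mul_eq (t : List ℕ) : ∀ a : FreeSemigroup ℕ,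
    t.foldl (fun a k => a * FreeSemigroup.of k) a = ⟨a.head, a.tail ++ t⟩ := by
  induction t with
  | nil => intro a; simp
  | cons k t ih =>
    intro a
    rw [List.foldl_cons, ih]
    simp

lemma word_eq (h : ℕ) (t : List ℕ) : word h t = ⟨h, t⟩ := by
  rw [word, foldl_mul_eq]; rfl

lemma W_append {l₁ l₂ : List ℕ} (h₁ : l₁ ≠ []) (h₂ : l₂ ≠ []) :
    W (l₁ ++ l₂) = W l₁ * W l₂ := by
  cases l₁ with
  | nil => exact absurd rfl h₁
  | cons a t₁ =>
    cases l₂ with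
    | nil => exact absurd rfl h₂
    | cons b t₂ => rfl

lemma rel_ins : ∀ (l : List ℕ), l ≠ [] → ∀ k,
    ConGen.Rel bRel (W l * FreeSemigroup.of k) (W (ins l k)) := by
  intro l
  induction l using List.reverseRecOn with
  | nil => intro h; exact absurd rfl h
  | append_singleton l' a ih =>
    intro _ k
    by_cases hak : a < k
    · have hins : ins (l' ++ [a]) k = ins l' (k + 1) ++ [a] := by
        simp [ins, insAux, hak]
      rw [hins]
      cases l' with
      | nil =>
        exact ConGen.Rel.of _ _ ⟨k, a, hak, rfl, rfl⟩
      | cons b t' =>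
        rw [W_append (l₁ := b :: t') (by simp) (by simp), W_append (ins_ne_nil _ _) (by simp),
          mul_assoc]
        refine ConGen.Rel.trans
          (ConGen.Rel.mul (ConGen.Rel.refl _)
            (ConGen.Rel.of _ _ ⟨k, a, hak, rfl, rfl⟩)) ?_
        rw [← mul_assoc]
        exact ConGen.Rel.mul (ih (by simp) (k + 1)) (ConGen.Rel.refl _)
    · have hins : ins (l' ++ [a]) k = (l' ++ [a]) ++ [k] := by
        simp [ins, insAux, hak]
      rw [hins, W_append (by simp) (by simp : ([k] : List ℕ) ≠ [])]
      exact ConGen.Rel.refl _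

lemma rel_foldl_congr {a b : FreeSemigroup ℕ} (h : ConGen.Rel bRel a b) (t : List ℕ) :
    ConGen.Rel bRel (t.foldl (fun a k => a * FreeSemigroup.of k) a)
      (t.foldl (fun a k => a * FreeSemigroup.of k) b) := by
  induction t generalizing a b with
  | nil => exact h
  | cons k t ih => exact ih (ConGen.Rel.mul h (ConGen.Rel.refl _))

lemma rel_foldl_ins : ∀ (t l : List ℕ), l ≠ [] →
    ConGen.Rel bRel (t.foldl (fun a k => a * FreeSemigroup.of k) (W l))
      (W (t.foldl ins l)) := by
  intro t
  induction t with
  | nil => intro l _; exact ConGen.Rel.refl _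
  | cons k t ih =>
    intro l hl
    refine ConGen.Rel.trans (rel_foldl_congr (rel_ins l hl k) t) ?_
    exact ih (ins l k) (ins_ne_nil _ _)

lemma insAux_head (k : ℕ) (r : List ℕ) :
    (insAux k r).head? = some k ∨ (insAux k r).head? = r.head? := by
  cases r with
  | nil => left; rfl
  | cons a t =>
    by_cases h : a < k
    · right; simp [insAux, h]
    · left; simp [insAux, h]

lemma chain'_insAux : ∀ (r : List ℕ) (k : ℕ),
    List.Chain' (· ≤ ·) r → List.Chain' (· ≤ ·) (insAux k r) := by
  intro r
  induction r with
  | nil => intro k _; simp [insAux, List.Chain']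
  | cons a t ih =>
    intro k hc
    rw [List.Chain', List.isChain_cons] at hc
    by_cases h : a < k
    · simp only [insAux, if_pos h]
      rw [List.Chain', List.isChain_cons]
      refine ⟨?_, ih (k + 1) hc.2⟩
      intro y hy
      rcases insAux_head (k + 1) t with h' | h'
      · rw [h'] at hy
        simp only [Option.mem_def, Option.some_inj] at hy
        omega
      · rw [h'] at hy
        exact hc.1 y hy
    · simp only [insAux, if_neg h]
      rw [List.Chain', List.isChain_cons]
      refine ⟨?_, List.isChain_cons.mpr hc⟩
      intro y hy
      simp only [List.head?_cons, Option.mem_def, Option.some_inj] at hy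
      omega

lemma chain'_ins {l : List ℕ} (h : List.Chain' (· ≥ ·) l) (k : ℕ) :
    List.Chain' (· ≥ ·) (ins l k) := by
  rw [ins, List.Chain', List.isChain_reverse]
  have h' : List.Chain' (· ≤ ·) l.reverse := by
    rw [List.Chain', List.isChain_reverse]
    exact h
  exact chain'_insAux _ _ h'

lemma chain'_foldl_ins : ∀ (t l : List ℕ), List.Chain' (· ≥ ·) l →
    List.Chain' (· ≥ ·) (List.foldl ins l t) := by
  intro t
  induction t with
  | nil => intro l h; exact h
  | cons k t ih => intro l h; exact ih _ (chain'_ins h k)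

lemma foldl_ins_ne_nil : ∀ (t l : List ℕ), l ≠ [] → List.foldl ins l t ≠ [] := by
  intro t
  induction t with
  | nil => intro l h; exact h
  | cons k t ih => intro l _; exact ih _ (ins_ne_nil _ _)

lemma ins_append {l : List ℕ} {a : ℕ} (ha : l.getLast? = some a) {k : ℕ} (hk : k ≤ a) :
    ins l k = l ++ [k] := by
  have h1 : l.reverse.head? = some a := by rw [List.head?_reverse, ha]
  obtain ⟨r, hr⟩ : ∃ r, l.reverse = a :: r := by
    cases hl : l.reverse with
    | nil => rw [hl] at h1; simp at h1
    | cons b r =>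
      rw [hl] at h1
      simp only [List.head?_cons, Option.some_inj] at h1
      exact ⟨r, by rw [h1]⟩
  rw [ins, hr]
  simp only [insAux, if_neg (by omega : ¬ a < k)]
  rw [List.reverse_cons, ← hr, List.reverse_reverse]

lemma foldl_ins_of_chain : ∀ (t l : List ℕ), l ≠ [] →
    List.Chain' (· ≥ ·) (l ++ t) → List.foldl ins l t = l ++ t := by
  intro t
  induction t with
  | nil => intro l _ _; simp
  | cons k t ih =>
    intro l hl hc
    obtain ⟨a, ha⟩ : ∃ a, l.getLast? = some a := by
      cases l with
      | nil => exact absurd rfl hl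
      | cons b l' => exact ⟨_, List.getLast?_eq_getLast (by simp)⟩
    have hak : k ≤ a := by
      rw [List.Chain', List.isChain_append] at hc
      exact hc.2.2 a ha k rfl
    have hins : ins l k = l ++ [k] := ins_append ha hak
    rw [List.foldl_cons, hins, ih (l ++ [k]) (by simp) (by simpa [List.append_assoc] using hc)]
    simp

end BAux

open BAux

/-- In the semigroup presented by the generators gₙ and the relations
gₙ gₘ = g_{m+1} gₙ (for m > n), every element has a unique weakly-decreasing
representative word. -/
theorem unique_decreasing_representative (x : (conGen bRel).Quotient) :
    ∃! p : ℕ × List ℕ,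
      List.Chain' (· ≥ ·) (p.1 :: p.2) ∧ x = ↑(word p.1 p.2) := by
  induction x using Con.induction_on with
  | H w =>
  set c : List ℕ := List.foldl ins [w.head] w.tail with hc
  have hcne : c ≠ [] := foldl_ins_ne_nil _ _ (by simp)
  have hchain : List.Chain' (· ≥ ·) c := chain'_foldl_ins _ _ (by simp [List.Chain'])
  obtain ⟨h0, t0, hct⟩ : ∃ h0 t0, c = h0 :: t0 := by
    cases hcc : c with
    | nil => exact absurd hcc hcne
    | cons h0 t0 => exact ⟨h0, t0, rfl⟩
  have hrel : ConGen.Rel bRel w (W c) := by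
    have hw : w = List.foldl (fun a k => a * FreeSemigroup.of k) (W [w.head]) w.tail := by
      show w = word w.head w.tail
      rw [word_eq]
    rw [hw]
    exact rel_foldl_ins w.tail [w.head] (by simp)
  have hwordc : word h0 t0 = W c := by rw [word_eq, hct]; rfl
  refine ⟨(h0, t0), ⟨hct ▸ hchain, ?_⟩, ?_⟩
  · show (↑w : (conGen bRel).Quotient) = ↑(word h0 t0)
    rw [Con.eq, hwordc]
    exact hrel
  · rintro ⟨q1, q2⟩ ⟨hqc, hqx⟩
    have h1 : (↑(word q1 q2) : (conGen bRel).Quotient) = ↑(word h0 t0) := by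
      rw [← hqx]
      rw [Con.eq, hwordc]
      exact hrel
    have h2 : ConGen.Rel bRel (word q1 q2) (word h0 t0) := ((conGen bRel).eq).1 h1
    have h3 := nf_invariant h2 []
    simp only [word_eq] at h3
    -- h3 : foldl ins [] (q1 :: q2) = foldl ins [] (h0 :: t0)
    have e1 : List.foldl ins [] (q1 :: q2) = q1 :: q2 := by
      rw [List.foldl_cons]
      show List.foldl ins [q1] q2 = q1 :: q2
      exact foldl_ins_of_chain q2 [q1] (by simp) hqc
    have e2 : List.foldl ins [] (h0 :: t0) = h0 :: t0 := by
      rw [List.foldl_cons]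
      show List.foldl ins [h0] t0 = h0 :: t0
      exact foldl_ins_of_chain t0 [h0] (by simp)
        (by rw [List.singleton_append, ← hct]; exact hchain)
    rw [e1, e2] at h3
    simp only [List.cons.injEq] at h3
    exact Prod.ext h3.1 h3.2
end

section
/- Define the application operation ⊛ on finite weakly-decreasing lists of natural numbers (canonical representations of B-terms) by: L₁ ⊛ L₂ = decrement-each-element (strip-trailing-zeros (sort-by-swap (L₁ ++ map (+1) L₂))), where sort-by-swap repeatedly replaces adjacent [n, m] with [m+1, n] when n < m until the list is weakly decreasing. Then for the list [0,0] (representing B∘B = B²), the iteration L_{i+1} = L_i ⊛ [0,0] starting from L₁ = [0,0] satisfies: for every m ≥ 1 and 0 ≤ j ≤ m, L_{m(m+1)/2 + j} equals the concatenation of the pairs (2m−i−j+2, 2m−i−j+2) for i = 1..j followed by the pairs (m−i, m−i) for i = j+1..m (each degree appearing twice consecutively). -/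
/-- One application of the swap rewriting rule on degree lists:
[..., n, m, ...] → [..., m+1, n, ...] when n < m. -/
inductive SwapStep : List ℕ → List ℕ → Prop
  | swap (l₁ l₂ : List ℕ) {n m : ℕ} (h : n < m) :
      SwapStep (l₁ ++ n :: m :: l₂) (l₁ ++ (m + 1) :: n :: l₂)

/-- Remove trailing zeros from a list. -/
def stripZeros (L : List ℕ) : List ℕ := (L.reverse.dropWhile (· == 0)).reverse

/-- `Apply L₁ L₂ L` holds when `L` is the canonical (weakly decreasing) list
representing the application of the B-term represented by `L₁` to that
represented by `L₂`:  append `L₁` with each element of `L₂` raised by one,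
normalize with the swap rule until weakly decreasing, strip trailing zeros,
and decrement each element. -/

def Apply (L₁ L₂ L : List ℕ) : Prop :=
  ∃ M : List ℕ,
    Relation.ReflTransGen SwapStep (L₁ ++ L₂.map (· + 1)) M ∧
    List.Chain' (· ≥ ·) M ∧
    L = (stripZeros M).map (· - 1)

/-- The canonical list of (B²)ₗ^{m(m+1)/2 + j}: degrees 2m−i−j+2 for i = 1..j,
then m−i for i = j+1..m, each repeated twice. -/
def target (m j : ℕ) : List ℕ :=
  ((List.range j).map fun i => 2 * m - (i + 1) - j + 2).flatMap (fun d => [d, d]) ++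
    ((List.range (m - j)).map fun i => m - (j + 1 + i)).flatMap (fun d => [d, d])

def ins (n : ℕ) : List ℕ → List ℕ
  | [] => [n]
  | m :: M => if m ≤ n then n :: m :: M else (m + 1) :: ins n M

def nf (L : List ℕ) : List ℕ := L.foldr ins []

lemma ins_comm {n m : ℕ} (h : n < m) : ∀ K, ins n (ins m K) = ins (m + 1) (ins n K)
  | [] => by
    simp [ins, show ¬ m ≤ n by omega, show n ≤ m + 1 by omega]
  | k :: K => by
    by_cases hkm : k ≤ m
    · by_cases hkn : k ≤ n
      · simp [ins, hkm, hkn, show ¬ m ≤ n by omega, show n ≤ m + 1 by omega]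
      · simp [ins, hkm, hkn, show ¬ m ≤ n by omega, show k + 1 ≤ m + 1 by omega]
    · simp [ins, hkm, show ¬ k ≤ n by omega, show ¬ k + 1 ≤ n by omega,
        show ¬ k + 1 ≤ m + 1 by omega, ins_comm h K]

lemma norm_swapstep {L L' : List ℕ} (h : SwapStep L L') : nf L = nf L' := by
  cases h with
  | swap l₁ l₂ h =>
    simp only [nf, List.foldr_append, List.foldr_cons]
    rw [ins_comm h]

lemma norm_rtg {L M : List ℕ} (h : Relation.ReflTransGen SwapStep L M) : nf L = nf M := by
  induction h with
  | refl => rfl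
  | tail _ hstep ih => rw [ih, norm_swapstep hstep]

lemma foldr_ins_of_chain : ∀ (L C : List ℕ), List.Chain' (· ≥ ·) (L ++ C) →
    List.foldr ins C L = L ++ C
  | [], C, _ => rfl
  | x :: L, C, h => by
    have h' : List.Chain' (· ≥ ·) (L ++ C) := h.tail
    simp only [List.foldr_cons, foldr_ins_of_chain L C h']
    cases hLC : L ++ C with
    | nil => simp [hLC, ins]
    | cons y R =>
      have : x ≥ y := by
        have := h
        rw [List.cons_append, hLC] at this
        exact (List.isChain_cons_cons.mp this).1
      simp [hLC, ins, this]

lemma norm_sorted {M : List ℕ} (h : List.Chain' (· ≥ ·) M) : nf M = M := by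
  have := foldr_ins_of_chain M [] (by simpa using h)
  simpa [nf] using this

/-- `blk c k = [c+k-1, c+k-1, ..., c, c]`, each value twice, descending. -/
def blk (c : ℕ) : ℕ → List ℕ
  | 0 => []
  | k + 1 => (c + k) :: (c + k) :: blk c k

lemma blk_snoc (c : ℕ) : ∀ k, blk c (k + 1) = blk (c + 1) k ++ [c, c]
  | 0 => by simp [blk]
  | k + 1 => by
    have ih := blk_snoc c k
    have h : c + (k + 1) = c + 1 + k := by omega
    show (c + (k+1)) :: (c + (k+1)) :: blk c (k+1) = blk (c+1) (k+1) ++ [c, c]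
    rw [ih, h]
    rfl

lemma blk_map_sub (c : ℕ) : ∀ k, (blk (c + 1) k).map (· - 1) = blk c k
  | 0 => rfl
  | k + 1 => by simp [blk, blk_map_sub c k]

lemma blk_head? (c k : ℕ) (C : List ℕ) :
    (blk c k ++ C).head? = if k = 0 then C.head? else some (c + k - 1) := by
  cases k with
  | zero => simp [blk]
  | succ k => simp [blk]

lemma chain_blk (c : ℕ) : ∀ (k : ℕ) (C : List ℕ), List.Chain' (· ≥ ·) C →
    (∀ y ∈ C.head?, y ≤ c) → List.Chain' (· ≥ ·) (blk c k ++ C)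
  | 0, C, hC, _ => by simpa [blk] using hC
  | k + 1, C, hC, hy => by
    have ih := chain_blk c k C hC hy
    simp only [blk, List.cons_append]
    refine List.isChain_cons_cons.mpr ⟨le_refl _, ?_⟩
    refine List.isChain_cons.mpr ⟨?_, ih⟩
    intro y hy'
    rw [blk_head? c k C] at hy'
    split at hy'
    · have := hy y hy'
      omega
    · simp at hy'
      omega

lemma stripZeros_snoc_nz (L : List ℕ) (x : ℕ) (hx : x ≠ 0) :
    stripZeros (L ++ [x]) = L ++ [x] := by
  simp [stripZeros, List.dropWhile_cons, hx]

lemma stripZeros_snoc_z (L : List ℕ) : stripZeros (L ++ [0]) = stripZeros L := by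
  simp [stripZeros, List.dropWhile_cons]

lemma range_bind_blk (a : ℕ) : ∀ j, j ≤ a + 1 →
    (((List.range j).map fun i => a - i).flatMap fun d => [d, d]) = blk (a + 1 - j) j
  | 0, _ => by simp [blk]
  | j + 1, h => by
    rw [List.range_succ, List.map_append, List.flatMap_append,
      range_bind_blk a j (by omega)]
    have h1 : a + 1 - (j + 1) = a - j := by omega
    have h2 : a - j + 1 = a + 1 - j := by omega
    rw [h1, blk_snoc, h2]
    simp

lemma target_eq (m j : ℕ) (hj : j ≤ m) :
    target m j = blk (2 * (m - j) + 2) j ++ blk 0 (m - j) := by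
  unfold target
  have e1 : ((List.range j).map fun i => 2 * m - (i + 1) - j + 2) =
      (List.range j).map fun i => (2 * m + 1 - j) - i := by
    apply List.map_congr_left
    intro i hi
    have : i < j := List.mem_range.mp hi
    omega
  have e2 : ((List.range (m - j)).map fun i => m - (j + 1 + i)) =
      (List.range (m - j)).map fun i => (m - j - 1) - i := by
    apply List.map_congr_left
    intro i hi
    have : i < m - j := List.mem_range.mp hi
    omega
  rw [e1, e2, range_bind_blk _ j (by omega)]
  have h3 : 2 * m + 1 - j + 1 - j = 2 * (m - j) + 2 := by omega
  rw [h3]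
  rcases Nat.eq_or_lt_of_le hj with h | h
  · subst h
    simp [blk]
  · rw [range_bind_blk _ (m - j) (by omega)]
    have : m - j - 1 + 1 - (m - j) = 0 := by omega
    rw [this]

lemma ins_cons_of_lt {n m : ℕ} (M : List ℕ) (h : n < m) :
    ins n (m :: M) = (m + 1) :: ins n M := by
  simp [ins, show ¬ m ≤ n by omega]

lemma ins_cons_of_ge {n m : ℕ} (M : List ℕ) (h : m ≤ n) :
    ins n (m :: M) = n :: m :: M := by
  simp [ins, h]

lemma ins_blk0 : ∀ k, ins k (blk 0 k) = k :: blk 0 k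
  | 0 => rfl
  | k + 1 => by
    have hb : blk 0 (k + 1) = k :: k :: blk 0 k := by simp [blk]
    rw [hb, ins_cons_of_ge _ (by omega)]

lemma foldr_blk0 : ∀ k, 1 ≤ k →
    List.foldr ins [1, 1] (blk 0 k) = (2 * k + 1) :: (2 * k + 1) :: blk 0 k
  | 0, h => absurd h (by omega)
  | 1, _ => by decide
  | k + 2, _ => by
    have ih := foldr_blk0 (k + 1) (by omega)
    have hb : blk 0 (k + 2) = (k + 1) :: (k + 1) :: blk 0 (k + 1) := by simp [blk]
    have hB := ins_blk0 (k + 1)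
    have inner : ins (k+1) ((2*(k+1)+1) :: (2*(k+1)+1) :: blk 0 (k+1)) =
        (2*(k+1)+1+1) :: (2*(k+1)+1+1) :: (k+1) :: blk 0 (k+1) := by
      rw [ins_cons_of_lt _ (by omega), ins_cons_of_lt _ (by omega), hB]
    have outer : ins (k+1) ((2*(k+1)+1+1) :: (2*(k+1)+1+1) :: (k+1) :: blk 0 (k+1)) =
        (2*(k+1)+1+1+1) :: (2*(k+1)+1+1+1) :: (k+1) :: (k+1) :: blk 0 (k+1) := by
      rw [ins_cons_of_lt _ (by omega), ins_cons_of_lt _ (by omega),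
        ins_cons_of_ge _ (le_refl _)]
    rw [hb, List.foldr_cons, List.foldr_cons, ih, inner, outer,
      show 2 * (k+1) + 1 + 1 + 1 = 2 * (k + 2) + 1 by omega, ← hb]

lemma blk_head?' (c k : ℕ) : (blk c k).head? = if k = 0 then none else some (c + k - 1) := by
  have := blk_head? c k []
  simpa using this

lemma chain_blk' (c k : ℕ) : List.Chain' (· ≥ ·) (blk c k) := by
  have := chain_blk c k [] List.isChain_nil (by simp)
  simpa using this

lemma stepA (m j : ℕ) (hj : j < m) :
    (stripZeros (nf (target m j ++ [1, 1]))).map (· - 1) = target m (j + 1) := by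
  obtain ⟨t, ht⟩ : ∃ t, m - j = t + 1 := ⟨m - j - 1, by omega⟩
  have htgt : target m j = blk (2 * t + 4) j ++ blk 0 (t + 1) := by
    rw [target_eq m j (le_of_lt hj), ht, show 2 * (t + 1) + 2 = 2 * t + 4 by omega]
  have hC : List.Chain' (· ≥ ·) ((2 * (t+1) + 1) :: (2 * (t+1) + 1) :: blk 0 (t + 1)) := by
    refine List.isChain_cons_cons.mpr ⟨le_refl _, ?_⟩
    refine List.isChain_cons.mpr ⟨?_, chain_blk' 0 (t + 1)⟩
    intro y hy
    rw [blk_head?'] at hy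
    simp at hy
    omega
  have hnf : nf (target m j ++ [1, 1]) =
      blk (2 * t + 4) j ++ (2 * (t+1) + 1) :: (2 * (t+1) + 1) :: blk 0 (t + 1) := by
    rw [htgt, List.append_assoc]
    show List.foldr ins [] _ = _
    rw [List.foldr_append, List.foldr_append,
      show List.foldr ins [] [1, 1] = [1, 1] from rfl,
      foldr_blk0 (t + 1) (by omega)]
    apply foldr_ins_of_chain
    apply chain_blk _ _ _ hC
    intro y hy
    simp at hy
    omega
  have hb : blk 0 (t + 1) = blk 1 t ++ [0, 0] := by simpa using blk_snoc 0 t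
  have hstrip : stripZeros (blk (2 * t + 4) j ++ (2 * (t+1) + 1) :: (2 * (t+1) + 1) :: blk 0 (t + 1))
      = blk (2 * t + 4) j ++ (2 * (t+1) + 1) :: (2 * (t+1) + 1) :: blk 1 t := by
    rw [hb]
    have hre : blk (2*t+4) j ++ (2*(t+1)+1) :: (2*(t+1)+1) :: (blk 1 t ++ [0, 0])
        = ((blk (2*t+4) j ++ (2*(t+1)+1) :: (2*(t+1)+1) :: blk 1 t) ++ [0]) ++ [0] := by
      simp
    rw [hre, stripZeros_snoc_z, stripZeros_snoc_z]
    cases t with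
    | zero =>
      have hre2 : blk (2*0+4) j ++ (2*(0+1)+1) :: (2*(0+1)+1) :: blk 1 0
          = (blk (2*0+4) j ++ [2*(0+1)+1]) ++ [2*(0+1)+1] := by simp [blk]
      rw [hre2, stripZeros_snoc_nz _ _ (by omega)]
    | succ s =>
      have hb2 : blk 1 (s + 1) = blk 2 s ++ [1, 1] := by simpa using blk_snoc 1 s
      rw [hb2]
      have hre2 : blk (2*(s+1)+4) j ++ (2*((s+1)+1)+1) :: (2*((s+1)+1)+1) :: (blk 2 s ++ [1, 1])
          = ((blk (2*(s+1)+4) j ++ (2*((s+1)+1)+1) :: (2*((s+1)+1)+1) :: blk 2 s) ++ [1]) ++ [1] := by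
        simp
      rw [hre2, stripZeros_snoc_nz _ _ (by omega)]
  rw [hnf, hstrip]
  have hmap : (blk (2*t+4) j ++ (2*(t+1)+1) :: (2*(t+1)+1) :: blk 1 t).map (· - 1)
      = blk (2*t+3) j ++ (2*t+2) :: (2*t+2) :: blk 0 t := by
    simp only [List.map_append, List.map_cons]
    rw [show (2*t+4) = (2*t+3)+1 by omega, blk_map_sub (2*t+3) j]
    have h1 : (blk 1 t).map (· - 1) = blk 0 t := by simpa using blk_map_sub 0 t
    rw [h1]
    norm_num
    omega
  rw [hmap, target_eq m (j+1) (by omega), show m - (j+1) = t by omega,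
    blk_snoc (2*t+2) j, show 2*t+2+1 = 2*t+3 by omega]
  simp

lemma stepB (m : ℕ) (hm : 1 ≤ m) :
    (stripZeros (nf (target m m ++ [1, 1]))).map (· - 1) = target (m + 1) 0 := by
  have htgt : target m m = blk 2 m := by
    rw [target_eq m m (le_refl m)]
    simp [blk]
  have hnf : nf (target m m ++ [1, 1]) = blk 2 m ++ [1, 1] := by
    rw [htgt]
    show List.foldr ins [] _ = _
    rw [List.foldr_append, show List.foldr ins [] [1, 1] = [1, 1] from rfl]
    apply foldr_ins_of_chain
    apply chain_blk
    · exact List.isChain_pair.mpr (le_refl 1)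
    · intro y hy; simp at hy; omega
  have hstrip : stripZeros (blk 2 m ++ [1, 1]) = blk 2 m ++ [1, 1] := by
    have hre : blk 2 m ++ [1, 1] = ((blk 2 m ++ [1]) ++ [1]) := by simp
    rw [hre, stripZeros_snoc_nz _ _ (by omega)]
  rw [hnf, hstrip]
  have hmap : (blk 2 m ++ [1, 1]).map (· - 1) = blk 1 m ++ [0, 0] := by
    simp only [List.map_append, List.map_cons]
    rw [show (2:ℕ) = 1+1 from rfl, blk_map_sub 1 m]
    simp
  rw [hmap, target_eq (m+1) 0 (by omega)]
  rw [show blk (2*(m+1-0)+2) 0 = [] from rfl, List.nil_append,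
    show m + 1 - 0 = m + 1 from rfl]
  simpa using (blk_snoc 0 m).symm

lemma apply_eq {L₁ L₂ L : List ℕ} (h : Apply L₁ L₂ L) :
    L = (stripZeros (nf (L₁ ++ L₂.map (· + 1)))).map (· - 1) := by
  obtain ⟨M, hr, hc, he⟩ := h
  rw [he, show M = nf (L₁ ++ L₂.map (· + 1)) from ((norm_rtg hr).trans (norm_sorted hc)).symm]

theorem b2_iteration_canonical (f : ℕ → List ℕ)
    (h1 : f 1 = [0, 0])
    (hstep : ∀ i : ℕ, 1 ≤ i → Apply (f i) [0, 0] (f (i + 1))) :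
    ∀ m j : ℕ, 1 ≤ m → j ≤ m → f (m * (m + 1) / 2 + j) = target m j := by
  have T1 : ∀ m : ℕ, 1 ≤ m → 1 ≤ m * (m + 1) / 2 := by
    intro m hm
    have : 1 * 2 ≤ m * (m + 1) := Nat.mul_le_mul hm (by omega)
    omega
  have app01 : ([0, 0] : List ℕ).map (· + 1) = [1, 1] := rfl
  have stepA' : ∀ m j, j < m → ∀ L, Apply (target m j) [0, 0] L → L = target m (j + 1) := by
    intro m j hj L hL
    rw [apply_eq hL, app01]
    exact stepA m j hj
  have stepB' : ∀ m, 1 ≤ m → ∀ L, Apply (target m m) [0, 0] L → L = target (m + 1) 0 := by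
    intro m hm L hL
    rw [apply_eq hL, app01]
    exact stepB m hm
  have inner : ∀ m, 1 ≤ m → f (m * (m + 1) / 2) = target m 0 →
      ∀ j, j ≤ m → f (m * (m + 1) / 2 + j) = target m j := by
    intro m hm h0 j
    induction j with
    | zero => intro _; simpa using h0
    | succ j ih =>
      intro hj
      have hij := ih (by omega)
      have happ := hstep (m * (m + 1) / 2 + j) (by have := T1 m hm; omega)
      rw [hij] at happ
      exact stepA' m j (by omega) _ happ
  have outer : ∀ m, 1 ≤ m → f (m * (m + 1) / 2) = target m 0 := by
    intro m hm
    induction m with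
    | zero => omega
    | succ m ih =>
      rcases Nat.lt_or_ge m 1 with h | h
      · have hm0 : m = 0 := by omega
        subst hm0
        have e : (1 * (1 + 1) / 2 : ℕ) = 1 := rfl
        rw [show ((0:ℕ) + 1) = 1 from rfl, e, h1, target_eq 1 0 (by omega)]
        decide
      · have h0 := ih h
        have hmm := inner m h h0 m (le_refl m)
        have happ := hstep (m * (m + 1) / 2 + m) (by have := T1 m h; omega)
        rw [hmm] at happ
        have hres := stepB' m h _ happ
        obtain ⟨t, ht⟩ := Nat.even_mul_succ_self m
        have e1 : m * (m + 1) / 2 = t := by rw [ht]; omega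
        have hq : (m + 1) * (m + 1 + 1) = m * (m + 1) + 2 * (m + 1) := by ring
        have e2 : (m + 1) * (m + 1 + 1) / 2 = t + m + 1 := by rw [hq, ht]; omega
        rw [e2]
        rw [e1] at hres
        exact hres
  intro m j hm hj
  exact inner m hm (outer m hm) j hj
end

section
/- The B-term B² = B ∘ B does not have the ρ-property: the sequence of canonical list representations L_i of (B²)ₗ^i (under the application operation ⊛ on decreasing lists with L₁ = [0,0]) has unbounded length; specifically L_{m(m+1)/2} has length 2m for every m ≥ 1, hence L_i = L_j implies i = j restricted to these indices, so the sequence (L_i) is not eventually periodic. -/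
namespace B2

def ins : ℕ → List ℕ → List ℕ
  | a, [] => [a]
  | a, b :: t => if b ≤ a then a :: b :: t else (b+1) :: ins a t

def nf (L : List ℕ) : List ℕ := L.foldr ins []

lemma ins_cons_le {a b : ℕ} {t : List ℕ} (h : b ≤ a) : ins a (b :: t) = a :: b :: t := by
  simp [ins, h]

lemma ins_cons_gt {a b : ℕ} {t : List ℕ} (h : a < b) : ins a (b :: t) = (b+1) :: ins a t := by
  simp [ins, Nat.not_le.mpr h]

lemma ins_comm (n m : ℕ) (h : n < m) : ∀ K, ins n (ins m K) = ins (m+1) (ins n K) := by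
  intro K
  induction K with
  | nil =>
      show ins n [m] = ins (m+1) [n]
      rw [ins_cons_gt h, ins_cons_le (by omega)]
      rfl
  | cons b t ih =>
      by_cases hbn : b ≤ n
      · rw [ins_cons_le (by omega : b ≤ m), ins_cons_gt h, ins_cons_le hbn,
           ins_cons_le (by omega : n ≤ m+1)]
      · by_cases hbm : b ≤ m
        · rw [ins_cons_le hbm, ins_cons_gt h, ins_cons_gt (by omega : n < b),
             ins_cons_le (by omega : b+1 ≤ m+1)]
        · rw [ins_cons_gt (by omega : m < b), ins_cons_gt (by omega : n < b+1),
             ins_cons_gt (by omega : n < b), ins_cons_gt (by omega : m+1 < b+1), ih]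

lemma nf_append (A B : List ℕ) : nf (A ++ B) = A.foldr ins (nf B) := by
  simp [nf, List.foldr_append]

lemma nf_swapStep {L L' : List ℕ} (h : SwapStep L L') : nf L = nf L' := by
  cases h with
  | swap l₁ l₂ h =>
      rw [nf_append, nf_append]
      congr 1
      show ins _ (ins _ (nf l₂)) = ins _ (ins _ (nf l₂))
      exact ins_comm _ _ h _

lemma nf_rtg {L M : List ℕ} (h : Relation.ReflTransGen SwapStep L M) : nf L = nf M := by
  induction h with
  | refl => rfl
  | tail _ h2 ih => rw [ih, nf_swapStep h2]

lemma chain_foldr : ∀ (A B : List ℕ), List.Chain' (· ≥ ·) (A ++ B) → A.foldr ins B = A ++ B := by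
  intro A
  induction A with
  | nil => intro B _; rfl
  | cons a A ih =>
      intro B h
      have hc : List.Chain' (· ≥ ·) (a :: (A ++ B)) := by simpa using h
      have htail : List.Chain' (· ≥ ·) (A ++ B) := hc.tail
      simp only [List.foldr_cons, ih B htail, List.cons_append]
      generalize hA : A ++ B = C at hc ⊢
      cases C with
      | nil => simp [ins]
      | cons h0 t =>
          have ha : h0 ≤ a := (List.isChain_cons_cons.mp hc).1
          rw [ins_cons_le ha]

lemma nf_chain {M : List ℕ} (h : List.Chain' (· ≥ ·) M) : nf M = M := by
  have := chain_foldr M [] (by simpa using h)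
  simpa [nf] using this

def stepF (L : List ℕ) : List ℕ := (stripZeros (nf (L ++ [1, 1]))).map (· - 1)

lemma apply_unique {L L' : List ℕ} (h : Apply L [0,0] L') : L' = stepF L := by
  obtain ⟨M, hr, hc, he⟩ := h
  have h1 : nf (L ++ [1,1]) = M := by
    have := nf_rtg hr
    simpa [nf_chain hc] using this
  rw [he, stepF, h1]


/-- `W k b` : pairs `b+k-1, b+k-1, ..., b, b`. -/
def W : ℕ → ℕ → List ℕ
  | 0, _ => []
  | (k+1), b => (b+k) :: (b+k) :: W k b

/-- `T j` : pairs `j-1, j-1, ..., 0, 0`. -/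
def T : ℕ → List ℕ
  | 0 => []
  | (j+1) => j :: j :: T j

lemma W_snoc : ∀ k b, W k (b+1) ++ [b, b] = W (k+1) b := by
  intro k
  induction k with
  | zero => intro b; simp [W]
  | succ k ih =>
      intro b
      show (b+1+k) :: (b+1+k) :: (W k (b+1) ++ [b,b]) = (b+(k+1)) :: (b+(k+1)) :: W (k+1) b
      rw [ih b, show b+1+k = b+(k+1) by omega]

lemma ins_T : ∀ j, ins j (T j) = j :: T j := by
  intro j
  cases j with
  | zero => simp [ins, T]
  | succ j => rw [show T (j+1) = j :: j :: T j from rfl, ins_cons_le (by omega)]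

lemma foldr_T (j : ℕ) : (T j).foldr ins [1, 1] = (2*j+1) :: (2*j+1) :: T j := by
  induction j with
  | zero => simp [T, ins]
  | succ j ih =>
      show ins j (ins j ((T j).foldr ins [1,1])) = _
      rw [ih, ins_cons_gt (by omega : j < 2*j+1), ins_cons_gt (by omega : j < 2*j+1),
        ins_T, ins_cons_gt (by omega : j < 2*j+1+1), ins_cons_gt (by omega : j < 2*j+1+1),
        ins_cons_le (le_refl j)]
      rw [show T (j+1) = j :: j :: T j from rfl, show 2*j+1+1+1 = 2*(j+1)+1 by omega]

lemma chain_T : ∀ j c, j ≤ c + 1 → List.Chain' (· ≥ ·) (c :: T j) := by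
  intro j
  induction j with
  | zero => intro c _; simp [T]; exact List.isChain_singleton c
  | succ j ih =>
      intro c hc
      show List.Chain' (· ≥ ·) (c :: j :: j :: T j)
      exact List.isChain_cons_cons.mpr ⟨by omega, List.isChain_cons_cons.mpr ⟨le_refl j, ih j (by omega)⟩⟩

lemma chain_W : ∀ k b (X : List ℕ), List.Chain' (· ≥ ·) (b :: X) →
    List.Chain' (· ≥ ·) ((b+k) :: (W k b ++ X)) := by
  intro k
  induction k with
  | zero => intro b X h; simpa [W] using h
  | succ k ih =>
      intro b X h
      show List.Chain' (· ≥ ·) ((b+(k+1)) :: (b+k) :: (b+k) :: (W k b ++ X))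
      exact List.isChain_cons_cons.mpr ⟨by omega,
        List.isChain_cons_cons.mpr ⟨le_refl _, ih b X h⟩⟩

lemma nf_G (k r : ℕ) :
    nf ((W k (2*r+2) ++ T r) ++ [1,1]) = W (k+1) (2*r+1) ++ T r := by
  rw [List.append_assoc, nf_append, nf_append]
  have h11 : nf [1,1] = [1,1] := by simp [nf, ins]
  rw [h11, foldr_T r]
  have hch : List.Chain' (· ≥ ·) (W k (2*r+2) ++ ((2*r+1) :: (2*r+1) :: T r)) := by
    have := chain_W k (2*r+2) ((2*r+1) :: (2*r+1) :: T r)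
      (List.isChain_cons_cons.mpr ⟨by omega,
        List.isChain_cons_cons.mpr ⟨le_refl _, chain_T r (2*r+1) (by omega)⟩⟩)
    exact this.tail
  rw [chain_foldr _ _ hch]
  have : W k (2*r+2) ++ ((2*r+1) :: (2*r+1) :: T r)
      = (W k ((2*r+1)+1) ++ [2*r+1, 2*r+1]) ++ T r := by
    rw [List.append_assoc]
    rfl
  rw [this, W_snoc]

lemma W_ne_zero : ∀ k b x, x ∈ W k (b+1) → x ≠ 0 := by
  intro k
  induction k with
  | zero => intro b x hx; simp [W] at hx
  | succ k ih =>
      intro b x hx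
      rw [show W (k+1) (b+1) = (b+1+k) :: (b+1+k) :: W k (b+1) from rfl] at hx
      simp only [List.mem_cons] at hx
      rcases hx with h | h | h
      · omega
      · omega
      · exact ih b x h

lemma strip_nonzero {Y : List ℕ} (h : ∀ x ∈ Y, x ≠ 0) : stripZeros Y = Y := by
  unfold stripZeros
  suffices hs : Y.reverse.dropWhile (· == 0) = Y.reverse by rw [hs, List.reverse_reverse]
  cases hY : Y.reverse with
  | nil => rfl
  | cons a t =>
      have haY : a ∈ Y := by rw [← List.mem_reverse, hY]; simp
      have := h a haY
      rw [List.dropWhile_cons]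
      simp [this]

lemma strip_snoc_zero (X : List ℕ) : stripZeros (X ++ [0]) = stripZeros X := by
  unfold stripZeros
  rw [List.reverse_append]
  rfl

lemma T_split : ∀ j, T (j+1) = (T j).map (· + 1) ++ [0, 0] := by
  intro j
  induction j with
  | zero => rfl
  | succ j ih =>
      show (j+1) :: (j+1) :: T (j+1) = ((j+1) :: (j+1) :: (T j).map (· + 1)) ++ [0,0]
      rw [ih]
      rfl

lemma W_map_sub : ∀ k b, (W k (b+1)).map (· - 1) = W k b := by
  intro k
  induction k with
  | zero => intro b; rfl
  | succ k ih =>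
      intro b
      show (b+1+k-1) :: (b+1+k-1) :: (W k (b+1)).map (· - 1) = (b+k) :: (b+k) :: W k b
      rw [ih b, show b+1+k-1 = b+k by omega]

lemma T_map_sub (j : ℕ) : ((T j).map (· + 1)).map (· - 1) = T j := by
  simp [List.map_map, Function.comp_def, Nat.add_sub_cancel]

lemma W_zero_eq_T : ∀ j, W j 0 = T j := by
  intro j
  induction j with
  | zero => rfl
  | succ j ih =>
      show (0+j) :: (0+j) :: W j 0 = j :: j :: T j
      rw [ih, Nat.zero_add]

lemma T_length : ∀ j, (T j).length = 2 * j := by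
  intro j
  induction j with
  | zero => rfl
  | succ j ih => show (T j).length + 1 + 1 = _; omega

lemma stepF_G_succ (k r : ℕ) :
    stepF (W k (2*(r+1)+2) ++ T (r+1)) = W (k+1) (2*r+2) ++ T r := by
  unfold stepF
  rw [show (2:ℕ)*(r+1)+2 = 2*(r+1)+2 from rfl]
  rw [nf_G k (r+1)]
  rw [T_split r, ← List.append_assoc]
  rw [show ([0,0] : List ℕ) = [0] ++ [0] from rfl, ← List.append_assoc]
  rw [strip_snoc_zero, strip_snoc_zero]
  have hnz : ∀ x ∈ W (k+1) (2*(r+1)+1) ++ (T r).map (· + 1), x ≠ 0 := by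
    intro x hx
    rcases List.mem_append.mp hx with h | h
    · exact W_ne_zero (k+1) (2*(r+1)) x (by simpa using h)
    · rcases List.mem_map.mp h with ⟨y, _, rfl⟩; omega
  rw [strip_nonzero hnz, List.map_append, T_map_sub]
  have : (W (k+1) (2*(r+1)+1)).map (· - 1) = W (k+1) (2*r+2) := by
    have := W_map_sub (k+1) (2*r+2)
    rw [show (2:ℕ)*(r+1)+1 = 2*r+2+1 by omega]
    exact this
  rw [this]

lemma stepF_G_zero (k : ℕ) :
    stepF (W k 2 ++ T 0) = W 0 (2*(k+1)+2) ++ T (k+1) := by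
  unfold stepF
  have h := nf_G k 0
  rw [show (2:ℕ)*0+2 = 2 by omega, show (2:ℕ)*0+1 = 1 by omega] at h
  rw [h]
  rw [show T 0 = ([] : List ℕ) from rfl, List.append_nil]
  have hnz : ∀ x ∈ W (k+1) 1, x ≠ 0 := fun x hx => W_ne_zero (k+1) 0 x (by simpa using hx)
  rw [strip_nonzero hnz]
  have := W_map_sub (k+1) 0
  rw [show (0:ℕ)+1 = 1 from rfl] at this
  rw [this, W_zero_eq_T]
  rfl

def tri (n : ℕ) : ℕ := n*(n+1)/2

lemma tri_succ (m : ℕ) : tri (m+1) = tri m + (m+1) := by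
  unfold tri
  rw [show (m+1)*(m+1+1) = m*(m+1) + (m+1)*2 by ring,
    Nat.add_mul_div_right _ _ (by norm_num : (0:ℕ) < 2)]

lemma tri_add (a b : ℕ) : tri (a+b) = tri a + tri b + a*b := by
  induction b with
  | zero => simp [tri]
  | succ b ih =>
      rw [show a+(b+1) = (a+b)+1 by omega, tri_succ, ih, tri_succ, Nat.mul_succ]
      ring

lemma tri_two_mul (j : ℕ) : tri (2*j) = j*(2*j+1) := by
  unfold tri
  rw [show 2*j*(2*j+1) = j*(2*j+1)*2 by ring, Nat.mul_div_cancel _ (by norm_num : (0:ℕ) < 2)]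

lemma tri_ge : ∀ m, m ≤ tri m := by
  intro m
  induction m with
  | zero => simp [tri]
  | succ m ih => rw [tri_succ]; omega

end B2


open B2 in
theorem b2_not_rho (f : ℕ → List ℕ)
    (h1 : f 1 = [0, 0])
    (hstep : ∀ i : ℕ, 1 ≤ i → Apply (f i) [0, 0] (f (i + 1))) :
    (∀ m : ℕ, 1 ≤ m → (f (m * (m + 1) / 2)).length = 2 * m) ∧
    ¬ ∃ i j : ℕ, 1 ≤ i ∧ 1 ≤ j ∧ f i = f (i + j) := by
  have hstep' : ∀ i : ℕ, 1 ≤ i → f (i+1) = stepF (f i) :=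
    fun i hi => apply_unique (hstep i hi)
  -- inner trajectory lemma
  have inner : ∀ m, 1 ≤ m → f (tri m) = T m →
      ∀ k, k ≤ m → f (tri m + k) = W k (2*(m-k)+2) ++ T (m-k) := by
    intro m hm hbase k
    induction k with
    | zero =>
        intro _
        simpa [W] using hbase
    | succ k ih =>
        intro hk
        have hk' : k ≤ m := by omega
        have hik := ih hk'
        have hpos : 1 ≤ tri m + k := by have := tri_ge m; omega
        have hs := hstep' (tri m + k) hpos
        rw [hik] at hs
        have hr : m - k = (m - (k+1)) + 1 := by omega
        rw [hr] at hs
        rw [stepF_G_succ k (m - (k+1))] at hs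
        rw [show tri m + (k+1) = tri m + k + 1 by omega]
        exact hs
  -- outer: f (tri m) = T m for all m ≥ 1
  have outer : ∀ m, 1 ≤ m → f (tri m) = T m := by
    intro m hm
    induction m with
    | zero => omega
    | succ m ih =>
        by_cases hm0 : m = 0
        · subst hm0
          rw [show tri 1 = 1 from rfl, h1]
          rfl
        · have hm1 : 1 ≤ m := by omega
          have hbase := ih hm1
          have hk := inner m hm1 hbase m (le_refl m)
          rw [Nat.sub_self] at hk
          have hpos : 1 ≤ tri m + m := by have := tri_ge m; omega
          have hs := hstep' (tri m + m) hpos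
          rw [hk, show (2*0+2 : ℕ) = 2 by omega] at hs
          rw [stepF_G_zero m] at hs
          rw [tri_succ, show tri m + (m+1) = tri m + m + 1 by omega, hs]
          rfl
  have hlen : ∀ m : ℕ, 1 ≤ m → (f (m * (m + 1) / 2)).length = 2 * m := by
    intro m hm
    have : f (tri m) = T m := outer m hm
    rw [show m * (m+1) / 2 = tri m from rfl, this, T_length]
  refine ⟨hlen, ?_⟩
  rintro ⟨i, j, hi, hj, hper⟩
  -- shift lemma
  have shift : ∀ t, f (i + t) = f (i + j + t) := by
    intro t
    induction t with
    | zero => simpa using hper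
    | succ t ih =>
        have h1' : 1 ≤ i + t := by omega
        have h2' : 1 ≤ i + j + t := by omega
        rw [show i + (t+1) = (i+t) + 1 by omega, hstep' _ h1', ih,
          show i + j + (t+1) = (i+j+t) + 1 by omega, hstep' _ h2']
  have shift' : ∀ s, i ≤ s → f s = f (s + j) := by
    intro s hs
    have := shift (s - i)
    rwa [show i + (s-i) = s by omega, show i + j + (s - i) = s + j by omega] at this
  have iterate : ∀ n, f (tri i + n * j) = f (tri i) := by
    intro n
    induction n with
    | zero => simp
    | succ n ih =>
        have hs : i ≤ tri i + n * j := by have := tri_ge i; omega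
        rw [show tri i + (n+1) * j = (tri i + n * j) + j by rw [Nat.succ_mul]; omega,
          ← shift' _ hs, ih]
  have key : tri i + (2*i+2*j+1) * j = tri (i + 2*j) := by
    rw [tri_add, tri_two_mul]
    ring
  have hit := iterate (2*i+2*j+1)
  rw [key] at hit
  have len1 : (f (tri (i + 2*j))).length = 2*(i+2*j) := hlen (i+2*j) (by omega)
  have len2 : (f (tri i)).length = 2*i := hlen i hi
  rw [hit, len2] at len1
  omega
end

section
/- Let l(X) denote the number of leaves and a(X) the number of right subtrees hanging off the leftmost spine (arity) of the binary tree corresponding to the βη-normal form of a B-term X'. Then for B-terms X', X: l(X' X) = l(X') − 1 + max(l(X) − a(X'), 0). -/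
/-- Unlabeled binary trees (βη-normal forms of B-terms). -/
inductive BTree : Type
  | leaf : BTree
  | node : BTree → BTree → BTree
  deriving DecidableEq

namespace BTree

/-- l(t): the number of leaves. -/
def leaves : BTree → ℕ
  | leaf => 1
  | node a b => leaves a + leaves b

/-- The right subtrees hanging off the leftmost spine, in order:
⟨★, t₁, ..., t_k⟩ ↦ [t₁, ..., t_k]. -/
def spine : BTree → List BTree
  | leaf => []
  | node a b => spine a ++ [b]

/-- a(t): the arity, i.e. the number of arguments along the leftmost spine. -/
def arity (t : BTree) : ℕ := (spine t).length

/-- Substitute the given trees for the leaves of `t`, left to right,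
returning the resulting tree together with the unused trees. -/
def substLeaves : BTree → List BTree → BTree × List BTree
  | leaf, [] => (leaf, [])
  | leaf, s :: rest => (s, rest)
  | node a b, ss =>
      let p := substLeaves a ss
      let q := substLeaves b p.2
      (node p.1 q.1, q.2)

/-- Application of B-terms on normal-form trees: if X' = ⟨★, t₁, ..., t_k⟩,
substitute t₁, ..., t_k for the leaves (lambda variables) of X in order, and
apply any leftover arguments on the right. -/
def treeApp (t' t : BTree) : BTree :=
  let p := substLeaves t (spine t')
  p.2.foldl node p.1

lemma substLeaves_snd (t : BTree) (ss : List BTree) :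
    (substLeaves t ss).2 = ss.drop (leaves t) := by
  induction t generalizing ss with
  | leaf => cases ss <;> simp [substLeaves, leaves]
  | node a b iha ihb =>
      simp [substLeaves, leaves, iha, ihb, List.drop_drop, Nat.add_comm]

lemma substLeaves_fst_leaves (t : BTree) (ss : List BTree) :
    leaves (substLeaves t ss).1 + min (leaves t) ss.length =
      leaves t + ((ss.take (leaves t)).map leaves).sum := by
  induction t generalizing ss with
  | leaf => cases ss <;> simp [substLeaves, leaves] <;> omega
  | node a b iha ihb =>
      have ha := iha ss
      have hb := ihb ((substLeaves a ss).2)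
      rw [substLeaves_snd] at hb
      simp only [substLeaves, leaves, substLeaves_snd]
      rw [List.take_add, List.map_append, List.sum_append]
      simp only [List.length_drop] at hb
      omega

lemma leaves_foldl (r : BTree) (l : List BTree) :
    leaves (l.foldl node r) = leaves r + (l.map leaves).sum := by
  induction l generalizing r with
  | nil => simp
  | cons x xs ih => simp [ih, leaves]; ring

lemma spine_sum (t : BTree) :
    ((spine t).map leaves).sum + 1 = leaves t := by
  induction t with
  | leaf => simp [spine, leaves]
  | node a b iha ihb => simp [spine, leaves]; omega

theorem leaves_treeApp (t' t : BTree) :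
    (leaves (treeApp t' t) : ℤ) =
      (leaves t' : ℤ) - 1 + max ((leaves t : ℤ) - (arity t' : ℤ)) 0 := by
  have h1 := substLeaves_fst_leaves t (spine t')
  have h2 := substLeaves_snd t (spine t')
  have hs := spine_sum t'
  have hsplit : (((spine t').take (leaves t)).map leaves).sum +
      (((spine t').drop (leaves t)).map leaves).sum = ((spine t').map leaves).sum := by
    rw [← List.sum_append, ← List.map_append, List.take_append_drop]
  have hmain : leaves (treeApp t' t) + min (leaves t) (arity t') + 1 =
      leaves t + leaves t' := by
    unfold treeApp
    rw [leaves_foldl, h2]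
    unfold arity
    omega
  zify at hmain
  omega

end BTree
end
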